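/- arXiv:1611.02093 — 8 statements merged into one kernel-verified Lean document; each statement's English description precedes it below -/
import Mathlib

section
/- Let G = P_3 be the path on 3 vertices with endpoints u = 1 and v = 3, and let the potential be q = (0, c, 0) for a real number c. Then there exists a time T ∈ ℝ at which perfect state transfer occurs from u to v if and only if there exist integers k and ℓ of opposite parity (one even, one odd) such that (k² − ℓ²)·c² = 8·ℓ². -/
open Matrix

/-- Adjacency matrix of the path on `n` vertices. -/
def pathAdj (n : ℕ) : Matrix (Fin n) (Fin n) ℝ :=
  Matrix.of fun j k => if (j : ℕ) + 1 = (k : ℕ) ∨ (k : ℕ) + 1 = (j : ℕ) then 1 else 0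

/-- Hamiltonian of the path on `n` vertices with potential `q`. -/
def pathHam (n : ℕ) (q : Fin n → ℝ) : Matrix (Fin n) (Fin n) ℝ :=
  pathAdj n + Matrix.diagonal q

/-- Perfect state transfer from `u` to `v` at time `T` for real Hamiltonian `H`. -/
noncomputable def pst {ι : Type*} [Fintype ι] [DecidableEq ι]
    (H : Matrix ι ι ℝ) (u v : ι) (T : ℝ) : Prop :=
  ‖NormedSpace.exp ((Complex.I * (T : ℂ)) • H.map (Complex.ofReal)) u v‖ = 1

noncomputable section PST3aux
open Complex

private lemma diag3 (a b c : ℂ) :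
    Matrix.diagonal ![a, b, c] = !![a,0,0; 0,b,0; 0,0,c] := by
  ext i j
  fin_cases i <;> fin_cases j <;>
    simp [Matrix.diagonal, Matrix.vecHead, Matrix.vecTail]

private lemma entry_formula (c T : ℝ) (R S : ℂ) (hRS : R * S = -2)
    (hsum' : R + S = (c : ℂ)) (hR0 : R ≠ 0) (hS0 : S ≠ 0) (hD0 : R - S ≠ 0) :
    NormedSpace.exp ((Complex.I * (T : ℂ)) • (pathHam 3 ![0, c, 0]).map Complex.ofReal) 0 2
      = Complex.exp (I * T * R) * (1 / (R * (R - S))) - 1/2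
        - Complex.exp (I * T * S) * (1 / (S * (R - S))) := by
  have hm : (pathHam 3 ![0, c, 0]).map Complex.ofReal = !![0,1,0; 1,(c:ℂ),1; 0,1,0] := by
    ext i j
    fin_cases i <;> fin_cases j <;>
      simp [pathHam, pathAdj, Matrix.diagonal, Matrix.map_apply]
  have hPQ : (!![1,1,1; R,0,S; 1,-1,1] : Matrix (Fin 3) (Fin 3) ℂ) *
      !![1/(R*(R-S)), 1/(R-S), 1/(R*(R-S)); 1/2, 0, -1/2;
         -1/(S*(R-S)), -1/(R-S), -1/(S*(R-S))] = 1 := by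
    rw [Matrix.mul_fin_three, Matrix.one_fin_three]
    ext i j
    fin_cases i <;> fin_cases j <;> simp [Matrix.vecHead, Matrix.vecTail]
    all_goals field_simp
    all_goals ring_nf
    all_goals linear_combination (norm := ring_nf) (S-R) * hRS
  have hQP := mul_eq_one_comm.mp hPQ
  have hHP : !![0,1,0; 1,(c:ℂ),1; 0,1,0] * !![1,1,1; R,0,S; 1,-1,1]
      = !![1,1,1; R,0,S; 1,-1,1] * Matrix.diagonal ![R, 0, S] := by
    rw [diag3, Matrix.mul_fin_three, Matrix.mul_fin_three]
    ext i j
    fin_cases i <;> fin_cases j <;> simp [Matrix.vecHead, Matrix.vecTail]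
    all_goals ring_nf
    all_goals rw [← hsum']
    all_goals ring_nf
    all_goals linear_combination (norm := ring_nf) hRS
  have hdiag : Matrix.diagonal ![Complex.I * T * R, 0, Complex.I * T * S]
      = (Complex.I * (T : ℂ)) • Matrix.diagonal ![R, 0, S] := by
    rw [diag3, diag3]
    ext i j
    fin_cases i <;> fin_cases j <;>
      simp [Matrix.vecHead, Matrix.vecTail, mul_assoc]
  have hHam : !![0,1,0; 1,(c:ℂ),1; 0,1,0]
      = !![1,1,1; R,0,S; 1,-1,1] * Matrix.diagonal ![R, 0, S] *
        !![1/(R*(R-S)), 1/(R-S), 1/(R*(R-S)); 1/2, 0, -1/2;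
           -1/(S*(R-S)), -1/(R-S), -1/(S*(R-S))] := by
    rw [← hHP, Matrix.mul_assoc, hPQ, Matrix.mul_one]
  have hconj : (Complex.I * (T : ℂ)) • (pathHam 3 ![0, c, 0]).map Complex.ofReal
      = !![1,1,1; R,0,S; 1,-1,1] *
          Matrix.diagonal ![Complex.I * T * R, 0, Complex.I * T * S] *
        !![1/(R*(R-S)), 1/(R-S), 1/(R*(R-S)); 1/2, 0, -1/2;
           -1/(S*(R-S)), -1/(R-S), -1/(S*(R-S))] := by
    rw [hm, hHam, hdiag, mul_smul_comm, smul_mul_assoc]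
  set U : (Matrix (Fin 3) (Fin 3) ℂ)ˣ :=
    ⟨!![1,1,1; R,0,S; 1,-1,1],
     !![1/(R*(R-S)), 1/(R-S), 1/(R*(R-S)); 1/2, 0, -1/2;
        -1/(S*(R-S)), -1/(R-S), -1/(S*(R-S))], hPQ, hQP⟩ with hUdef
  have hexp : NormedSpace.exp
      ((Complex.I * (T : ℂ)) • (pathHam 3 ![0, c, 0]).map Complex.ofReal)
      = !![1,1,1; R,0,S; 1,-1,1] *
          Matrix.diagonal ![Complex.exp (Complex.I * T * R), 1, Complex.exp (Complex.I * T * S)] *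
        !![1/(R*(R-S)), 1/(R-S), 1/(R*(R-S)); 1/2, 0, -1/2;
           -1/(S*(R-S)), -1/(R-S), -1/(S*(R-S))] := by
    have h1 : (Complex.I * (T : ℂ)) • (pathHam 3 ![0, c, 0]).map Complex.ofReal
        = (U : Matrix (Fin 3) (Fin 3) ℂ) *
            Matrix.diagonal ![Complex.I * T * R, 0, Complex.I * T * S] *
          ((U⁻¹ : (Matrix (Fin 3) (Fin 3) ℂ)ˣ) : Matrix (Fin 3) (Fin 3) ℂ) := hconj
    have harg : (NormedSpace.exp (![Complex.I * T * R, 0, Complex.I * T * S] : Fin 3 → ℂ))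
        = ![Complex.exp (Complex.I * T * R), 1, Complex.exp (Complex.I * T * S)] := by
      funext i
      rw [Pi.coe_exp]
      fin_cases i <;>
        simp [Matrix.vecHead, Matrix.vecTail, ← Complex.exp_eq_exp_ℂ, NormedSpace.exp_zero]
    rw [h1, Matrix.exp_units_conj U, Matrix.exp_diagonal, harg]
    rfl
  rw [hexp, diag3, Matrix.mul_fin_three, Matrix.mul_fin_three]
  simp [Matrix.vecHead, Matrix.vecTail]
  field_simp
  ring


private lemma abs_form (a b θ φ : ℝ) (ha : 0 < a) (hb : 0 < b) (hab : a + b = 1/2) :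
    ‖(a:ℂ) * Complex.exp ((θ:ℂ) * Complex.I)
        + (b:ℂ) * Complex.exp ((φ:ℂ) * Complex.I) - 1/2‖ = 1
      ↔ (Real.cos θ = -1 ∧ Real.cos φ = -1) := by
  have hre : ((a:ℂ) * Complex.exp ((θ:ℂ) * Complex.I)
      + (b:ℂ) * Complex.exp ((φ:ℂ) * Complex.I) - 1/2).re
      = a * Real.cos θ + b * Real.cos φ - 1/2 := by
    simp [Complex.exp_ofReal_mul_I_re, Complex.exp_ofReal_mul_I_im]
  have him : ((a:ℂ) * Complex.exp ((θ:ℂ) * Complex.I)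
      + (b:ℂ) * Complex.exp ((φ:ℂ) * Complex.I) - 1/2).im
      = a * Real.sin θ + b * Real.sin φ := by
    simp [Complex.exp_ofReal_mul_I_re, Complex.exp_ofReal_mul_I_im]
  have habs2 : ‖(a:ℂ) * Complex.exp ((θ:ℂ) * Complex.I)
      + (b:ℂ) * Complex.exp ((φ:ℂ) * Complex.I) - 1/2‖ ^ 2
      = (a * Real.cos θ + b * Real.cos φ - 1/2)^2 + (a * Real.sin θ + b * Real.sin φ)^2 := by
    rw [Complex.sq_norm, Complex.normSq_apply, hre, him]; ring
  have hpy1 := Real.sin_sq_add_cos_sq θ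
  have hpy2 := Real.sin_sq_add_cos_sq φ
  have key : 1 - ((a * Real.cos θ + b * Real.cos φ - 1/2)^2
        + (a * Real.sin θ + b * Real.sin φ)^2)
      = 2*a*b*(1 - (Real.cos θ * Real.cos φ + Real.sin θ * Real.sin φ))
        + a*(1 + Real.cos θ) + b*(1 + Real.cos φ) := by
    linear_combination (-(a^2)) * hpy1 + (-(b^2)) * hpy2 + (-(a+b+3/2)) * hab
  have ht1 : 0 ≤ 2*a*b*(1 - (Real.cos θ * Real.cos φ + Real.sin θ * Real.sin φ)) := by
    have h1 : Real.cos θ * Real.cos φ + Real.sin θ * Real.sin φ = Real.cos (θ - φ) :=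
      (Real.cos_sub θ φ).symm
    have h2 := Real.cos_le_one (θ - φ)
    rw [h1]
    have := mul_pos ha hb
    nlinarith
  have hnn := norm_nonneg ((a:ℂ) * Complex.exp ((θ:ℂ) * Complex.I)
      + (b:ℂ) * Complex.exp ((φ:ℂ) * Complex.I) - 1/2)
  constructor
  · intro h
    have h1 : (a * Real.cos θ + b * Real.cos φ - 1/2)^2
        + (a * Real.sin θ + b * Real.sin φ)^2 = 1 := by
      rw [← habs2, h]; norm_num
    have hz : 2*a*b*(1 - (Real.cos θ * Real.cos φ + Real.sin θ * Real.sin φ))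
        + a*(1 + Real.cos θ) + b*(1 + Real.cos φ) = 0 := by linarith [key, h1]
    have hcθ := Real.neg_one_le_cos θ
    have hcφ := Real.neg_one_le_cos φ
    have h2 : 0 ≤ a*(1 + Real.cos θ) := mul_nonneg ha.le (by linarith)
    have h3 : 0 ≤ b*(1 + Real.cos φ) := mul_nonneg hb.le (by linarith)
    have h4 : a*(1 + Real.cos θ) = 0 := by linarith
    have h5 : b*(1 + Real.cos φ) = 0 := by linarith
    constructor
    · rcases mul_eq_zero.mp h4 with h' | h' <;> linarith
    · rcases mul_eq_zero.mp h5 with h' | h' <;> linarith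
  · rintro ⟨h1, h2⟩
    have hs1 : Real.sin θ = 0 := by
      have : Real.sin θ ^ 2 = 0 := by linear_combination hpy1 + (1 - Real.cos θ) * h1
      exact pow_eq_zero_iff two_ne_zero |>.mp this
    have hs2 : Real.sin φ = 0 := by
      have : Real.sin φ ^ 2 = 0 := by linear_combination hpy2 + (1 - Real.cos φ) * h2
      exact pow_eq_zero_iff two_ne_zero |>.mp this
    have h6 : ‖(a:ℂ) * Complex.exp ((θ:ℂ) * Complex.I)
        + (b:ℂ) * Complex.exp ((φ:ℂ) * Complex.I) - 1/2‖ ^ 2 = 1 := by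
      rw [habs2, h1, h2, hs1, hs2]; linear_combination (a + b + 3/2) * hab
    have h7 : (‖(a:ℂ) * Complex.exp ((θ:ℂ) * Complex.I)
        + (b:ℂ) * Complex.exp ((φ:ℂ) * Complex.I) - 1/2‖ - 1)
        * (‖(a:ℂ) * Complex.exp ((θ:ℂ) * Complex.I)
        + (b:ℂ) * Complex.exp ((φ:ℂ) * Complex.I) - 1/2‖ + 1) = 0 := by
      linear_combination h6
    rcases mul_eq_zero.mp h7 with h | h
    · linarith
    · linarith


private lemma cos_odd_pi (n : ℤ) (hn : Odd n) : Real.cos ((n:ℝ)*Real.pi) = -1 := by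
  obtain ⟨m, hm⟩ := hn
  exact Real.cos_eq_neg_one_iff.mpr ⟨m, by rw [hm]; push_cast; ring⟩


/-- On the path `P₃` with potential `(0, c, 0)`, perfect state transfer between
the endpoints occurs at some time iff there are integers `k, ℓ` of opposite parity with
`(k² − ℓ²)·c² = 8·ℓ²`. -/
theorem pst_P3_iff (c : ℝ) :
    (∃ T : ℝ, pst (pathHam 3 ![0, c, 0]) 0 2 T) ↔
      ∃ k l : ℤ, ((Even k ∧ Odd l) ∨ (Odd k ∧ Even l)) ∧
        ((k : ℝ) ^ 2 - (l : ℝ) ^ 2) * c ^ 2 = 8 * (l : ℝ) ^ 2 := by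
  obtain ⟨d, hd2, hdpos⟩ : ∃ d : ℝ, d^2 = c^2+8 ∧ 0 < d :=
    ⟨Real.sqrt (c^2+8), Real.sq_sqrt (by positivity), Real.sqrt_pos.mpr (by positivity)⟩
  have hcd : c < d := by nlinarith
  have hcd' : -d < c := by nlinarith
  have hrpos : 0 < (c+d)/2 := by linarith
  have hsneg : (c-d)/2 < 0 := by linarith
  have hrs : ((c+d)/2) * ((c-d)/2) = -2 := by linear_combination (-(1:ℝ)/4) * hd2
  have hchar : ∀ T : ℝ, pst (pathHam 3 ![0, c, 0]) 0 2 T ↔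
      (Real.cos (T*((c+d)/2)) = -1 ∧ Real.cos (T*((c-d)/2)) = -1) := by
    intro T
    have hr0 : ((c+d)/2 : ℝ) ≠ 0 := ne_of_gt hrpos
    have hs0 : ((c-d)/2 : ℝ) ≠ 0 := ne_of_lt hsneg
    have hRS : ((((c+d)/2 : ℝ)) : ℂ) * ((((c-d)/2 : ℝ)) : ℂ) = -2 := by exact_mod_cast hrs
    have hsum' : ((((c+d)/2 : ℝ)) : ℂ) + ((((c-d)/2 : ℝ)) : ℂ) = (c : ℂ) := by
      have : ((c+d)/2 : ℝ) + ((c-d)/2 : ℝ) = c := by ring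
      exact_mod_cast this
    have hR0 : ((((c+d)/2 : ℝ)) : ℂ) ≠ 0 := Complex.ofReal_ne_zero.mpr hr0
    have hS0 : ((((c-d)/2 : ℝ)) : ℂ) ≠ 0 := Complex.ofReal_ne_zero.mpr hs0
    have hD0 : ((((c+d)/2 : ℝ)) : ℂ) - ((((c-d)/2 : ℝ)) : ℂ) ≠ 0 := by
      rw [← Complex.ofReal_sub]
      refine Complex.ofReal_ne_zero.mpr ?_
      have : ((c+d)/2 : ℝ) - ((c-d)/2 : ℝ) = d := by ring
      rw [this]; exact ne_of_gt hdpos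
    unfold pst
    rw [entry_formula c T _ _ hRS hsum' hR0 hS0 hD0]
    have hE : Complex.exp (Complex.I * T * (((c+d)/2 : ℝ) : ℂ))
          * (1 / ((((c+d)/2 : ℝ) : ℂ) * ((((c+d)/2 : ℝ) : ℂ) - (((c-d)/2 : ℝ) : ℂ)))) - 1/2
        - Complex.exp (Complex.I * T * (((c-d)/2 : ℝ) : ℂ))
          * (1 / ((((c-d)/2 : ℝ) : ℂ) * ((((c+d)/2 : ℝ) : ℂ) - (((c-d)/2 : ℝ) : ℂ))))
      = ((1/(((c+d)/2)*(((c+d)/2) - ((c-d)/2))) : ℝ) : ℂ)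
          * Complex.exp (((T*((c+d)/2) : ℝ) : ℂ) * Complex.I)
        + ((-(1/(((c-d)/2)*(((c+d)/2) - ((c-d)/2)))) : ℝ) : ℂ)
          * Complex.exp (((T*((c-d)/2) : ℝ) : ℂ) * Complex.I) - 1/2 := by
      rw [show (Complex.I * (T:ℂ) * (((c+d)/2 : ℝ) : ℂ)) = ((T*((c+d)/2) : ℝ):ℂ) * Complex.I by
            push_cast; ring,
          show (Complex.I * (T:ℂ) * (((c-d)/2 : ℝ) : ℂ)) = ((T*((c-d)/2) : ℝ):ℂ) * Complex.I by
            push_cast; ring]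
      push_cast
      ring
    rw [hE]
    refine abs_form _ _ _ _ ?_ ?_ ?_
    · have h1 : (0:ℝ) < ((c+d)/2)*(((c+d)/2) - ((c-d)/2)) := by nlinarith
      positivity
    · have h1 : ((c-d)/2)*(((c+d)/2) - ((c-d)/2)) < 0 := by nlinarith
      have := one_div_neg.mpr h1
      linarith
    · have hd0 : d ≠ 0 := ne_of_gt hdpos
      have hcd1 : c + d ≠ 0 := ne_of_gt (by linarith)
      have hcd2 : c - d ≠ 0 := ne_of_lt (by linarith)
      field_simp
      ring_nf
      linear_combination (norm := ring_nf) hd2 - 8 * (mul_inv_cancel₀ hd0)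
  simp only [hchar]
  constructor
  · rintro ⟨T, h1, h2⟩
    obtain ⟨k1, hk1⟩ := Real.cos_eq_neg_one_iff.mp h1
    obtain ⟨k2, hk2⟩ := Real.cos_eq_neg_one_iff.mp h2
    have hT0 : T ≠ 0 := by
      rintro rfl
      rw [zero_mul, Real.cos_zero] at h1
      norm_num at h1
    refine ⟨k1 - k2, k1 + k2 + 1, ?_, ?_⟩
    · rcases Int.even_or_odd (k1 - k2) with he | ho
      · obtain ⟨m, hm⟩ := he
        exact Or.inl ⟨⟨m, hm⟩, ⟨m + k2, by omega⟩⟩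
      · obtain ⟨m, hm⟩ := ho
        exact Or.inr ⟨⟨m, hm⟩, ⟨m + k2 + 1, by omega⟩⟩
    · have hc' : T*c = 2*((k1:ℝ) + k2 + 1)*Real.pi := by
        linear_combination (-1:ℝ)*hk1 - hk2
      have hd' : T*d = 2*((k1:ℝ) - k2)*Real.pi := by
        linear_combination (-1:ℝ)*hk1 + hk2
      have h1' : T^2*c^2 = 4*((k1:ℝ) + k2 + 1)^2*Real.pi^2 := by
        linear_combination (T*c + 2*((k1:ℝ) + k2 + 1)*Real.pi) * hc'
      have h3' : T^2*c^2 + 8*T^2 = 4*((k1:ℝ) - k2)^2*Real.pi^2 := by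
        linear_combination (T*d + 2*((k1:ℝ) - k2)*Real.pi) * hd' - T^2*hd2
      have hT2 : 0 < T^2 := lt_of_le_of_ne (sq_nonneg T) (Ne.symm (pow_ne_zero 2 hT0))
      have hpi2 : 0 < Real.pi^2 := by positivity
      have h4 : 8*T^2 = 4*(((k1:ℝ) - k2)^2 - ((k1:ℝ) + k2 + 1)^2)*Real.pi^2 := by linarith
      push_cast
      apply mul_right_cancel₀ (ne_of_gt (mul_pos hT2 hpi2))
      linear_combination (((k1:ℝ) - k2)^2 - ((k1:ℝ) + k2 + 1)^2)*Real.pi^2*h1'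
        - ((k1:ℝ) + k2 + 1)^2*Real.pi^2*h4
  · rintro ⟨k, l, hp, heq⟩
    have hk0 : k ≠ 0 := by
      rintro rfl
      push_cast at heq
      have hl2 : (l:ℝ)^2 = 0 := by nlinarith [sq_nonneg ((l:ℝ)*c), sq_nonneg (l:ℝ)]
      have hl0 : l = 0 := by exact_mod_cast pow_eq_zero_iff two_ne_zero |>.mp hl2
      subst hl0
      rcases hp with ⟨-, h⟩ | ⟨h, -⟩ <;> · obtain ⟨m, hm⟩ := h; omega
    have hodd : Odd (l + k) ∧ Odd (l - k) := by
      rcases hp with ⟨hk, hl⟩ | ⟨hk, hl⟩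
      · exact ⟨hl.add_even hk, hl.sub_even hk⟩
      · exact ⟨Even.add_odd hl hk, Even.sub_odd hl hk⟩
    have hd0 : d ≠ 0 := ne_of_gt hdpos
    have hsq : ((k:ℝ)*c)^2 = ((l:ℝ)*d)^2 := by linear_combination heq - (l:ℝ)^2*hd2
    have hfac : ((k:ℝ)*c - (l:ℝ)*d) * ((k:ℝ)*c + (l:ℝ)*d) = 0 := by linear_combination hsq
    rcases mul_eq_zero.mp hfac with h | h
    · have hcase : (k:ℝ)*c = (l:ℝ)*d := by linarith [sub_eq_zero.mp h]
      refine ⟨2*(k:ℝ)*Real.pi/d, ?_, ?_⟩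
      · have hTr : 2*(k:ℝ)*Real.pi/d * ((c+d)/2) = (((l + k : ℤ)):ℝ)*Real.pi := by
          push_cast
          field_simp
          ring_nf
          linear_combination (norm := ring_nf) hcase
        rw [hTr]; exact cos_odd_pi _ hodd.1
      · have hTs : 2*(k:ℝ)*Real.pi/d * ((c-d)/2) = (((l - k : ℤ)):ℝ)*Real.pi := by
          push_cast
          field_simp
          ring_nf
          linear_combination (norm := ring_nf) hcase
        rw [hTs]; exact cos_odd_pi _ hodd.2
    · have hcase : (k:ℝ)*c = -((l:ℝ)*d) := by linarith
      refine ⟨-(2*(k:ℝ)*Real.pi)/d, ?_, ?_⟩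
      · have hTr : -(2*(k:ℝ)*Real.pi)/d * ((c+d)/2) = (((l - k : ℤ)):ℝ)*Real.pi := by
          push_cast
          field_simp
          ring_nf
          linear_combination (norm := ring_nf) (-1:ℝ) * hcase
        rw [hTr]; exact cos_odd_pi _ hodd.2
      · have hTs : -(2*(k:ℝ)*Real.pi)/d * ((c-d)/2) = (((l + k : ℤ)):ℝ)*Real.pi := by
          push_cast
          field_simp
          ring_nf
          linear_combination (norm := ring_nf) (-1:ℝ) * hcase
        rw [hTs]; exact cos_odd_pi _ hodd.1

end PST3aux
end

section
/- Let G = P_3 be the path on 3 vertices with endpoints u = 1 and v = 3, and let the potential be q = (0, c, 0) for a real number c. If there exist integers k and ℓ of opposite parity (one even, one odd) such that (k² − ℓ²)·c² = 8·ℓ², then perfect state transfer occurs from u to v at the time T = 2πk/√(c² + 8). -/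
open Matrix

open Complex in
lemma odd_exp_pi_mul_I {m : ℤ} (hm : Odd m) :
    Complex.exp ((m : ℂ) * ((Real.pi : ℂ) * Complex.I)) = -1 := by
  rw [Complex.exp_int_mul, Complex.exp_pi_mul_I, hm.neg_one_zpow]

set_option maxRecDepth 8000 in
/-- The key matrix-exponential computation for `P₃`, with `d² = z² + 8` and the two
nonzero-eigenvalue phases equal to `-1`. -/
lemma exp_P3_entry (z d t : ℂ) (hd2 : d ^ 2 = z ^ 2 + 8) (hdne : d ≠ 0)
    (hep : Complex.exp (Complex.I * t * ((z + d) / 2)) = -1)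
    (hem : Complex.exp (Complex.I * t * ((z - d) / 2)) = -1) :
    NormedSpace.exp ((Complex.I * t) • (!![0,1,0;1,z,1;0,1,0] : Matrix (Fin 3) (Fin 3) ℂ)) 0 2
      = -1 := by
  have h8d : (8 : ℂ) * d ≠ 0 := by simp [hdne]
  set U : Matrix (Fin 3) (Fin 3) ℂ :=
    !![1, 1, 1; 0, (z + d) / 2, (z - d) / 2; -1, 1, 1] with hU_def
  set W : Matrix (Fin 3) (Fin 3) ℂ :=
    !![4 * d, 0, -(4 * d);
       2 * (d - z), (d + z) * (d - z), 2 * (d - z);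
       2 * (d + z), (z - d) * (d + z), 2 * (d + z)] with hW_def
  have hUW : U * W = ((8 : ℂ) * d) • (1 : Matrix (Fin 3) (Fin 3) ℂ) := by
    ext i j
    fin_cases i <;> fin_cases j <;>
      simp [hU_def, hW_def, Matrix.mul_apply, Fin.sum_univ_three, Matrix.smul_apply,
        Matrix.one_apply, Fin.ext_iff] <;>
      norm_num <;>
      first
        | ring1
        | linear_combination d * hd2
        | linear_combination (-d) * hd2
        | linear_combination ((d + z) / 2) * hd2
        | linear_combination (-((d + z) / 2)) * hd2
        | linear_combination ((d - z) / 2) * hd2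
        | linear_combination (-((d - z) / 2)) * hd2
  have hWU : W * U = ((8 : ℂ) * d) • (1 : Matrix (Fin 3) (Fin 3) ℂ) := by
    ext i j
    fin_cases i <;> fin_cases j <;>
      simp [hU_def, hW_def, Matrix.mul_apply, Fin.sum_univ_three, Matrix.smul_apply,
        Matrix.one_apply, Fin.ext_iff] <;>
      norm_num <;>
      first
        | ring1
        | linear_combination d * hd2
        | linear_combination (-d) * hd2
        | linear_combination ((d + z) / 2) * hd2
        | linear_combination (-((d + z) / 2)) * hd2
        | linear_combination ((d - z) / 2) * hd2
        | linear_combination (-((d - z) / 2)) * hd2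
  set V : Matrix (Fin 3) (Fin 3) ℂ := ((8 : ℂ) * d)⁻¹ • W with hV_def
  have hUV : U * V = 1 := by
    rw [hV_def, Matrix.mul_smul, hUW, smul_smul, inv_mul_cancel₀ h8d, one_smul]
  have hVU : V * U = 1 := by
    rw [hV_def, Matrix.smul_mul, hWU, smul_smul, inv_mul_cancel₀ h8d, one_smul]
  set u : (Matrix (Fin 3) (Fin 3) ℂ)ˣ := ⟨U, V, hUV, hVU⟩ with hu_def
  set M : Matrix (Fin 3) (Fin 3) ℂ :=
    (Complex.I * t) • (!![0,1,0;1,z,1;0,1,0] : Matrix (Fin 3) (Fin 3) ℂ) with hM_def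
  set D : Matrix (Fin 3) (Fin 3) ℂ :=
    Matrix.diagonal ![0, Complex.I * t * ((z + d) / 2),
      Complex.I * t * ((z - d) / 2)] with hD_def
  have hMU : M * U = U * D := by
    ext i j
    fin_cases i <;> fin_cases j <;>
      simp [hM_def, hU_def, hD_def, Matrix.mul_apply, Fin.sum_univ_three, Matrix.smul_apply,
        Matrix.diagonal_apply] <;>
      norm_num <;>
      first
        | ring1
        | linear_combination ((Complex.I * t) / 4) * hd2
        | linear_combination (-((Complex.I * t) / 4)) * hd2
  have hM : M = U * D * V := by
    calc M = M * (U * V) := by rw [hUV, Matrix.mul_one]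
    _ = (M * U) * V := by rw [Matrix.mul_assoc]
    _ = U * D * V := by rw [hMU]
  have hexp : NormedSpace.exp M = U * NormedSpace.exp D * V := by
    rw [hM]
    exact Matrix.exp_units_conj u D
  have hexpD : NormedSpace.exp D = Matrix.diagonal ![1, -1, -1] := by
    rw [hD_def, Matrix.exp_diagonal]
    have hv : NormedSpace.exp ![0, Complex.I * t * ((z + d) / 2),
        Complex.I * t * ((z - d) / 2)] = ![(1:ℂ), -1, -1] := by
      funext i
      fin_cases i <;> rw [Pi.coe_exp] <;>
        simp [← Complex.exp_eq_exp_ℂ, hep, hem]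
    rw [hv]
  have hdiag3 : Matrix.diagonal ![(1:ℂ), -1, -1] = !![1,0,0;0,-1,0;0,0,-1] := by
    ext i j
    fin_cases i <;> fin_cases j <;>
      simp [Matrix.diagonal_apply, Fin.ext_iff, Matrix.vecHead, Matrix.vecTail]
  show NormedSpace.exp M 0 2 = -1
  rw [hexp, hexpD, hdiag3, hV_def]
  simp [hU_def, hW_def, Matrix.mul_apply, Fin.sum_univ_three, Matrix.smul_apply]
  field_simp
  ring

lemma pathHam3_map (c : ℝ) : (pathHam 3 ![0, c, 0]).map (Complex.ofReal)
    = !![0,1,0;1,(c:ℂ),1;0,1,0] := by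
  ext i j
  fin_cases i <;> fin_cases j <;>
    simp [pathHam, pathAdj, Matrix.map_apply, Matrix.add_apply, Matrix.diagonal_apply,
      Matrix.of_apply]

set_option maxRecDepth 8000 in
/-- On the path `P₃` with potential `(0, c, 0)`, if there are integers `k, ℓ` of
opposite parity with `(k² − ℓ²)·c² = 8·ℓ²`, then perfect state transfer between the endpoints
occurs at time `T = 2πk/√(c² + 8)`. -/
theorem pst_P3_time (c : ℝ) (k l : ℤ)
    (hpar : (Even k ∧ Odd l) ∨ (Odd k ∧ Even l))
    (heq : ((k : ℝ) ^ 2 - (l : ℝ) ^ 2) * c ^ 2 = 8 * (l : ℝ) ^ 2) :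
    pst (pathHam 3 ![0, c, 0]) 0 2 (2 * Real.pi * (k : ℝ) / Real.sqrt (c ^ 2 + 8)) := by
  have h8 : (0:ℝ) < c ^ 2 + 8 := by positivity
  set Δ : ℝ := Real.sqrt (c ^ 2 + 8) with hΔdef
  have hΔsq : Δ ^ 2 = c ^ 2 + 8 := Real.sq_sqrt h8.le
  have hΔpos : (0:ℝ) < Δ := Real.sqrt_pos.2 h8
  have hd2 : ((Δ : ℂ)) ^ 2 = ((c : ℂ)) ^ 2 + 8 := by exact_mod_cast hΔsq
  have hdne : (Δ : ℂ) ≠ 0 := by simp [Complex.ofReal_eq_zero, hΔpos.ne']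
  set T : ℝ := 2 * Real.pi * (k : ℝ) / Δ with hTdef
  have hT : (T : ℂ) = 2 * (Real.pi : ℂ) * (k : ℂ) / (Δ : ℂ) := by
    rw [hTdef]; push_cast; ring
  have hsq : ((k : ℝ) * c) ^ 2 = ((l : ℝ) * Δ) ^ 2 := by
    have h : ((l:ℝ) * Δ)^2 = (l:ℝ)^2 * (c^2+8) := by rw [mul_pow, hΔsq]
    nlinarith [heq]
  have hsign : (k : ℝ) * c = (l : ℝ) * Δ ∨ (k : ℝ) * c = -((l : ℝ) * Δ) :=
    sq_eq_sq_iff_eq_or_eq_neg.mp hsq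
  have hoddp : Odd (k + l) := by
    rcases hpar with ⟨hk, hl⟩ | ⟨hk, hl⟩
    · exact hk.add_odd hl
    · exact hk.add_even hl
  have hoddm : Odd (k - l) := by
    rcases hpar with ⟨hk, hl⟩ | ⟨hk, hl⟩
    · exact hk.sub_odd hl
    · exact hk.sub_even hl
  have hep : Complex.exp (Complex.I * (T : ℂ) * (((c:ℂ) + (Δ:ℂ)) / 2)) = -1 := by
    rcases hsign with hs | hs
    · have hkz : (k : ℂ) * (c:ℂ) = (l : ℂ) * (Δ:ℂ) := by exact_mod_cast hs
      have heqx : Complex.I * (T : ℂ) * (((c:ℂ) + (Δ:ℂ)) / 2)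
          = ((k + l : ℤ) : ℂ) * ((Real.pi : ℂ) * Complex.I) := by
        rw [hT]; push_cast; field_simp
        linear_combination hkz
      rw [heqx]; exact odd_exp_pi_mul_I hoddp
    · have hkz : (k : ℂ) * (c:ℂ) = -((l : ℂ) * (Δ:ℂ)) := by exact_mod_cast hs
      have heqx : Complex.I * (T : ℂ) * (((c:ℂ) + (Δ:ℂ)) / 2)
          = ((k - l : ℤ) : ℂ) * ((Real.pi : ℂ) * Complex.I) := by
        rw [hT]; push_cast; field_simp
        linear_combination hkz
      rw [heqx]; exact odd_exp_pi_mul_I hoddm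
  have hem : Complex.exp (Complex.I * (T : ℂ) * (((c:ℂ) - (Δ:ℂ)) / 2)) = -1 := by
    rcases hsign with hs | hs
    · have hkz : (k : ℂ) * (c:ℂ) = (l : ℂ) * (Δ:ℂ) := by exact_mod_cast hs
      have heqx : Complex.I * (T : ℂ) * (((c:ℂ) - (Δ:ℂ)) / 2)
          = ((l - k : ℤ) : ℂ) * ((Real.pi : ℂ) * Complex.I) := by
        rw [hT]; push_cast; field_simp
        linear_combination hkz
      rw [heqx]
      exact odd_exp_pi_mul_I (by obtain ⟨m, hm⟩ := hoddm; exact ⟨-m - 1, by omega⟩)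
    · have hkz : (k : ℂ) * (c:ℂ) = -((l : ℂ) * (Δ:ℂ)) := by exact_mod_cast hs
      have heqx : Complex.I * (T : ℂ) * (((c:ℂ) - (Δ:ℂ)) / 2)
          = ((-l - k : ℤ) : ℂ) * ((Real.pi : ℂ) * Complex.I) := by
        rw [hT]; push_cast; field_simp
        linear_combination hkz
      rw [heqx]
      exact odd_exp_pi_mul_I (by obtain ⟨m, hm⟩ := hoddp; exact ⟨-m - 1, by omega⟩)
  have hHmap := pathHam3_map c
  have hkey := exp_P3_entry (c:ℂ) (Δ:ℂ) (T:ℂ) hd2 hdne hep hem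
  show ‖
      (NormedSpace.exp ((Complex.I * (T : ℂ)) • (pathHam 3 ![0, c, 0]).map Complex.ofReal) 0 2)‖
      = 1
  rw [hHmap, hkey]
  simp
end

section
/- Let G = P_3 be the path on 3 vertices with endpoints u = 1 and v = 3, and let the potential be q = (0, c, 0) for a real number c ≠ 0. If perfect state transfer occurs from u to v at a time T > 0, then |c|·T ≥ 2π. In other words, the potential value and the transfer time cannot both be small. -/
open Matrix

/- ======================= auxiliary real matrix identities ======================= -/

section Aux

/-- eigenvector matrix -/
noncomputable def Umat (x : ℝ) : Matrix (Fin 3) (Fin 3) ℝ :=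
  !![1,1,1; 0,x,(-2/x); -1,1,1]

/-- inverse of eigenvector matrix -/
noncomputable def Vmat (x : ℝ) : Matrix (Fin 3) (Fin 3) ℝ :=
  !![1/2, 0, -1/2;
     1/(2+x^2), x/(2+x^2), 1/(2+x^2);
     1/(2+(-2/x)^2), (-2/x)/(2+(-2/x)^2), 1/(2+(-2/x)^2)]

lemma UV_eq_one (x : ℝ) (hx : x ≠ 0) : Umat x * Vmat x = 1 := by
  have h1 : (2:ℝ)+x^2 ≠ 0 := by positivity
  have h2 : (2:ℝ)+(-2/x)^2 ≠ 0 := by positivity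
  ext i j
  fin_cases i <;> fin_cases j <;>
      simp [Umat, Vmat, Matrix.mul_apply, Fin.sum_univ_three, Matrix.one_apply] <;>
      field_simp <;> ring

lemma VU_eq_one (x : ℝ) (hx : x ≠ 0) : Vmat x * Umat x = 1 := by
  have h1 : (2:ℝ)+x^2 ≠ 0 := by positivity
  have h2 : (2:ℝ)+(-2/x)^2 ≠ 0 := by positivity
  ext i j
  fin_cases i <;> fin_cases j <;>
      simp [Umat, Vmat, Matrix.mul_apply, Fin.sum_univ_three, Matrix.one_apply] <;>
      field_simp <;> ring

lemma HU_eq_UD (x : ℝ) (hx : x ≠ 0) :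
    !![0,1,0; 1,(x + -2/x),1; 0,1,0] * Umat x
      = Umat x * Matrix.diagonal ![0,x,-2/x] := by
  ext i j
  fin_cases i <;> fin_cases j <;>
      simp [Umat, Matrix.mul_apply, Fin.sum_univ_three, Matrix.diagonal] <;>
      field_simp <;> ring

end Aux

/- ======================= key complex equality-case lemma ======================= -/

lemma key_lemma (a b : ℝ) (ha : 0 < a) (hb : 0 < b) (hab : a + b = 1/2)
    (z w : ℂ) (hz : ‖z‖ = 1) (hw : ‖w‖ = 1)
    (h : ‖(-(1/2 : ℂ) + (a:ℂ)*z + (b:ℂ)*w)‖ = 1) : z = -1 ∧ w = -1 := by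
  have hz2 : z.re*z.re + z.im*z.im = 1 := by
    have h1 : Complex.normSq z = 1 := by
      rw [← Complex.sq_norm, hz]; norm_num
    simpa [Complex.normSq_apply] using h1
  have hw2 : w.re*w.re + w.im*w.im = 1 := by
    have h1 : Complex.normSq w = 1 := by
      rw [← Complex.sq_norm, hw]; norm_num
    simpa [Complex.normSq_apply] using h1
  have hF : Complex.normSq (-(1/2 : ℂ) + (a:ℂ)*z + (b:ℂ)*w) = 1 := by
    rw [← Complex.sq_norm, h]; norm_num
  simp only [Complex.normSq_apply, Complex.add_re, Complex.add_im, Complex.neg_re,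
    Complex.neg_im, Complex.mul_re, Complex.mul_im, Complex.ofReal_re, Complex.ofReal_im,
    Complex.div_re, Complex.div_im, Complex.one_re, Complex.one_im] at hF
  norm_num at hF
  clear h hz hw
  -- nonnegativity facts
  have hq : z.re*w.re + z.im*w.im ≤ 1 := by nlinarith [sq_nonneg (z.re*w.im - z.im*w.re), sq_nonneg (z.re*w.re + z.im*w.im - 1)]
  have hzr : -1 ≤ z.re := by nlinarith [sq_nonneg z.im, sq_nonneg (z.re+1)]
  have hwr : -1 ≤ w.re := by nlinarith [sq_nonneg w.im, sq_nonneg (w.re+1)]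
  have hkey : a*(1+z.re) + b*(1+w.re) + 2*a*b*(1 - (z.re*w.re + z.im*w.im)) = 0 := by
    linear_combination (-1 : ℝ) * hF + a^2 * hz2 + b^2 * hw2 + (a+b+3/2) * hab
  have t1 : 0 ≤ a*(1+z.re) := mul_nonneg ha.le (by linarith)
  have t2 : 0 ≤ b*(1+w.re) := mul_nonneg hb.le (by linarith)
  have t3 : 0 ≤ 2*a*b*(1 - (z.re*w.re + z.im*w.im)) := by
    apply mul_nonneg (by positivity) (by linarith)
  have e1 : a*(1+z.re) = 0 := by linarith
  have e2 : b*(1+w.re) = 0 := by linarith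
  have hzre : z.re = -1 := by
    rcases mul_eq_zero.1 e1 with h' | h'
    · exact absurd h' (ne_of_gt ha)
    · linarith
  have hwre : w.re = -1 := by
    rcases mul_eq_zero.1 e2 with h' | h'
    · exact absurd h' (ne_of_gt hb)
    · linarith
  have hzim : z.im = 0 := by
    have h' : z.im * z.im = 0 := by linear_combination hz2 + (1 - z.re) * hzre
    exact mul_self_eq_zero.1 h'
  have hwim : w.im = 0 := by
    have h' : w.im * w.im = 0 := by linear_combination hw2 + (1 - w.re) * hwre
    exact mul_self_eq_zero.1 h'
  refine ⟨?_, ?_⟩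
  · apply Complex.ext <;> simp [hzre, hzim]
  · apply Complex.ext <;> simp [hwre, hwim]

/- ======================= main theorem ======================= -/

/-- On the path `P₃` with potential `(0, c, 0)`, `c ≠ 0`, if perfect state
transfer between the endpoints occurs at a time `T > 0`, then `|c|·T ≥ 2π`. -/
theorem pst_P3_time_lower_bound (c : ℝ) (hc : c ≠ 0) (T : ℝ) (hT : 0 < T)
    (h : pst (pathHam 3 ![0, c, 0]) 0 2 T) :
    2 * Real.pi ≤ |c| * T := by
  -- real eigenvalue setup
  have hs0 : 0 ≤ Real.sqrt (c^2+8) := Real.sqrt_nonneg _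
  have hs2 : (Real.sqrt (c^2+8))^2 = c^2+8 := Real.sq_sqrt (by positivity)
  set x : ℝ := (c + Real.sqrt (c^2+8))/2 with hx_def
  have hx_pos : 0 < x := by
    have h1 : |c| < Real.sqrt (c^2+8) := by
      nlinarith [abs_nonneg c, sq_abs c]
    have h2 := (abs_lt.1 h1).1
    rw [hx_def]; linarith
  have hx0 : x ≠ 0 := ne_of_gt hx_pos
  have hquad : x^2 = c*x + 2 := by rw [hx_def]; nlinarith [hs2]
  set y : ℝ := -2/x with hy_def
  have hcxy : c = x + y := by
    rw [hy_def]; field_simp; nlinarith [hquad]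
  have hde1 : (0:ℝ) < 2 + x^2 := by positivity
  have hde2 : (0:ℝ) < 2 + y^2 := by positivity
  set a : ℝ := 1/(2+x^2) with ha_def
  set b : ℝ := 1/(2+y^2) with hb_def
  have ha : 0 < a := by rw [ha_def]; positivity
  have hb : 0 < b := by rw [hb_def]; positivity
  have hab : a + b = 1/2 := by
    rw [ha_def, hb_def, hy_def]
    have hq1 : (2:ℝ) + x^2 ≠ 0 := ne_of_gt hde1
    field_simp
    ring
  -- the Hamiltonian as an explicit matrix
  have hH3 : pathHam 3 ![0,c,0] = !![0,1,0; 1,c,1; 0,1,0] := by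
    ext i j
    fin_cases i <;> fin_cases j <;>
      simp [pathHam, pathAdj, Matrix.diagonal, Matrix.one_apply]
  -- real diagonalization
  have hreal : !![0,1,0; 1,c,1; 0,1,0]
      = Umat x * Matrix.diagonal ![0,x,y] * Vmat x := by
    have h3 := HU_eq_UD x hx0
    have h4 := UV_eq_one x hx0
    calc !![0,1,0; 1,c,1; 0,1,0]
        = !![0,1,0; 1,c,1; 0,1,0] * (Umat x * Vmat x) := by rw [h4, mul_one]
      _ = (!![0,1,0; 1,(x + -2/x),1; 0,1,0] * Umat x) * Vmat x := by
          rw [← Matrix.mul_assoc]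
          congr 2
          rw [hcxy, hy_def]
      _ = Umat x * Matrix.diagonal ![0,x,y] * Vmat x := by rw [h3, hy_def]
  -- move to ℂ
  set Uc : Matrix (Fin 3) (Fin 3) ℂ := (Umat x).map Complex.ofReal with hUc_def
  set Vc : Matrix (Fin 3) (Fin 3) ℂ := (Vmat x).map Complex.ofReal with hVc_def
  have hofr : (Complex.ofReal : ℝ → ℂ) = ⇑Complex.ofRealHom := rfl
  have hUVc : Uc * Vc = 1 := by
    rw [hUc_def, hVc_def, hofr, ← Matrix.map_mul, UV_eq_one x hx0]
    exact Matrix.map_one _ (map_zero _) (map_one _)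
  have hVUc : Vc * Uc = 1 := by
    rw [hUc_def, hVc_def, hofr, ← Matrix.map_mul, VU_eq_one x hx0]
    exact Matrix.map_one _ (map_zero _) (map_one _)
  set Uu : (Matrix (Fin 3) (Fin 3) ℂ)ˣ := ⟨Uc, Vc, hUVc, hVUc⟩ with hUu_def
  have hC : (pathHam 3 ![0,c,0]).map Complex.ofReal
      = Uc * (Matrix.diagonal fun k => ((![0,x,y] k : ℝ) : ℂ)) * Vc := by
    rw [hH3, hreal, hUc_def, hVc_def, hofr, Matrix.map_mul, Matrix.map_mul,
      Matrix.diagonal_map (map_zero _)]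
  -- the smul
  have hsmul : (Complex.I * (T : ℂ)) • (pathHam 3 ![0,c,0]).map Complex.ofReal
      = Uc * (Matrix.diagonal fun k => (Complex.I * (T:ℂ)) * ((![0,x,y] k : ℝ) : ℂ)) * Vc := by
    have hdiag : (Matrix.diagonal fun k => Complex.I * (T:ℂ) * ((![0,x,y] k : ℝ) : ℂ))
        = (Complex.I * (T:ℂ)) • Matrix.diagonal (fun k => ((![0,x,y] k : ℝ) : ℂ)) := by
      rw [← Matrix.diagonal_smul]
      rfl
    rw [hC, hdiag, mul_smul_comm, smul_mul_assoc]
  -- the matrix exponential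
  have hexp : NormedSpace.exp ((Complex.I * (T : ℂ)) • (pathHam 3 ![0,c,0]).map Complex.ofReal)
      = Uc * (Matrix.diagonal fun k => Complex.exp ((Complex.I * (T:ℂ)) * ((![0,x,y] k : ℝ) : ℂ))) * Vc := by
    rw [hsmul]
    have h6 := Matrix.exp_units_conj Uu
      (Matrix.diagonal fun k => (Complex.I * (T:ℂ)) * ((![0,x,y] k : ℝ) : ℂ))
    rw [Matrix.exp_diagonal] at h6
    have h7 : (NormedSpace.exp fun k => (Complex.I * (T:ℂ)) * ((![0,x,y] k : ℝ) : ℂ))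
        = fun k => Complex.exp ((Complex.I * (T:ℂ)) * ((![0,x,y] k : ℝ) : ℂ)) := by
      rw [Pi.exp_def]
      funext k
      rw [← Complex.exp_eq_exp_ℂ]
    rw [h7] at h6
    exact h6
  -- the (0,2) entry
  set z : ℂ := Complex.exp (((T*x : ℝ) : ℂ) * Complex.I) with hz_def
  set w : ℂ := Complex.exp (((T*y : ℝ) : ℂ) * Complex.I) with hw_def
  have e0 : Complex.I * (T:ℂ) * (((0:ℝ)) : ℂ) = 0 := by push_cast; ring
  have e1 : Complex.I * (T:ℂ) * ((x : ℝ) : ℂ) = ((T*x : ℝ) : ℂ) * Complex.I := by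
    push_cast; ring
  have e2 : Complex.I * (T:ℂ) * ((y : ℝ) : ℂ) = ((T*y : ℝ) : ℂ) * Complex.I := by
    push_cast; ring
  have hent : (Uc * (Matrix.diagonal fun k => Complex.exp ((Complex.I * (T:ℂ)) * ((![0,x,y] k : ℝ) : ℂ))) * Vc) 0 2
      = -(1/2 : ℂ) + (a:ℂ)*z + (b:ℂ)*w := by
    rw [hz_def, hw_def, ha_def, hb_def]
    simp only [hUc_def, hVc_def, Umat, Vmat, Matrix.mul_apply, Fin.sum_univ_three,
      Matrix.map_apply, Matrix.diagonal_apply, Matrix.cons_val', Matrix.cons_val_zero,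
      Matrix.cons_val_one, Matrix.head_cons, Matrix.head_fin_const, Matrix.empty_val',
      Matrix.cons_val_fin_one, Matrix.cons_val_two, Matrix.tail_cons]
    norm_num [e0, e1, e2]
    push_cast
    ring_nf
    push_cast
    rw [hy_def]; push_cast; ring
  unfold pst at h
  rw [hexp, hent] at h
  obtain ⟨hz1, hw1⟩ := key_lemma a b ha hb hab z w
    (Complex.norm_exp_ofReal_mul_I _) (Complex.norm_exp_ofReal_mul_I _) h
  -- product of the two phases
  have hzw : Complex.exp (((T*c : ℝ) : ℂ) * Complex.I) = 1 := by
    have hsplit : ((T*c : ℝ) : ℂ) * Complex.I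
        = ((T*x : ℝ) : ℂ) * Complex.I + ((T*y : ℝ) : ℂ) * Complex.I := by
      rw [hcxy]; push_cast; ring
    rw [hsplit, Complex.exp_add, ← hz_def, ← hw_def, hz1, hw1]
    norm_num
  obtain ⟨n, hn⟩ := Complex.exp_eq_one_iff.1 hzw
  have hn' : ((T*c : ℝ) : ℂ) = (n : ℂ) * (2 * (Real.pi : ℂ)) := by
    apply mul_right_cancel₀ Complex.I_ne_zero
    rw [hn]; ring
  have hr : T*c = (n:ℝ) * (2*Real.pi) := by exact_mod_cast hn'
  have hn0 : n ≠ 0 := by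
    rintro rfl
    norm_num at hr
    rcases hr with h' | h'
    · exact hT.ne' h'
    · exact hc h'
  have h1n : (1:ℝ) ≤ |(n:ℝ)| := by
    have := Int.one_le_abs hn0
    calc (1:ℝ) = ((1:ℤ):ℝ) := by norm_num
      _ ≤ ((|n|:ℤ):ℝ) := by exact_mod_cast this
      _ = |(n:ℝ)| := by push_cast; ring
  have hpi : (0:ℝ) < 2*Real.pi := by positivity
  calc 2*Real.pi = 1 * (2*Real.pi) := by ring
    _ ≤ |(n:ℝ)| * (2*Real.pi) := by
        exact mul_le_mul_of_nonneg_right h1n hpi.le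
    _ = |(n:ℝ) * (2*Real.pi)| := by
        rw [abs_mul, abs_of_pos hpi]
    _ = |T*c| := by rw [hr]
    _ = |c| * T := by rw [abs_mul, abs_of_pos hT]; ring
end

section
/- Let G_1 and G_2 be finite simple graphs with potentials q_1 : V(G_1) → ℝ and q_2 : V(G_2) → ℝ. Suppose perfect state transfer occurs from u to v at time T in G_1 (with potential q_1) and from x to y at the same time T in G_2 (with potential q_2). Then in the Cartesian product G_1 □ G_2, equipped with the potential q defined by q((a,b)) = q_1(a) + q_2(b), perfect state transfer occurs from (u,x) to (v,y) at time T. -/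
open Matrix

open SimpleGraph in
instance boxProdAdjDecidable {α β : Type*} [DecidableEq α] [DecidableEq β]
    (G : SimpleGraph α) (H : SimpleGraph β) [DecidableRel G.Adj] [DecidableRel H.Adj] :
    DecidableRel (G □ H).Adj :=
  fun _ _ => decidable_of_iff _ SimpleGraph.boxProd_adj.symm

open Kronecker in
/-- Kronecker product with the identity on the right, as a ring hom. -/
def kronRightRingHom (V₁ V₂ : Type*) [Fintype V₁] [DecidableEq V₁] [Fintype V₂]
    [DecidableEq V₂] : Matrix V₁ V₁ ℂ →+* Matrix (V₁ × V₂) (V₁ × V₂) ℂ where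
  toFun A := A ⊗ₖ (1 : Matrix V₂ V₂ ℂ)
  map_one' := Matrix.one_kronecker_one
  map_mul' A B := by simpa using Matrix.mul_kronecker_mul A B (1 : Matrix V₂ V₂ ℂ) 1
  map_zero' := Matrix.zero_kronecker _
  map_add' A B := Matrix.add_kronecker A B _

open Kronecker in
/-- Kronecker product with the identity on the left, as a ring hom. -/
def kronLeftRingHom (V₁ V₂ : Type*) [Fintype V₁] [DecidableEq V₁] [Fintype V₂]
    [DecidableEq V₂] : Matrix V₂ V₂ ℂ →+* Matrix (V₁ × V₂) (V₁ × V₂) ℂ where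
  toFun B := (1 : Matrix V₁ V₁ ℂ) ⊗ₖ B
  map_one' := Matrix.one_kronecker_one
  map_mul' A B := by simpa using Matrix.mul_kronecker_mul (1 : Matrix V₁ V₁ ℂ) 1 A B
  map_zero' := Matrix.kronecker_zero _
  map_add' A B := Matrix.kronecker_add _ A B

open Kronecker in
lemma continuous_kronRight {V₁ V₂ : Type*} [Fintype V₁] [DecidableEq V₁] [Fintype V₂]
    [DecidableEq V₂] :
    Continuous (fun A : Matrix V₁ V₁ ℂ => A ⊗ₖ (1 : Matrix V₂ V₂ ℂ)) := by
  apply continuous_matrix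
  rintro ⟨a, b⟩ ⟨c, d⟩
  show Continuous fun A : Matrix V₁ V₁ ℂ => A a c * (1 : Matrix V₂ V₂ ℂ) b d
  exact (continuous_id.matrix_elem a c).mul continuous_const

open Kronecker in
lemma continuous_kronLeft {V₁ V₂ : Type*} [Fintype V₁] [DecidableEq V₁] [Fintype V₂]
    [DecidableEq V₂] :
    Continuous (fun B : Matrix V₂ V₂ ℂ => (1 : Matrix V₁ V₁ ℂ) ⊗ₖ B) := by
  apply continuous_matrix
  rintro ⟨a, b⟩ ⟨c, d⟩
  show Continuous fun B : Matrix V₂ V₂ ℂ => (1 : Matrix V₁ V₁ ℂ) a c * B b d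
  exact continuous_const.mul ((continuous_apply d).comp (continuous_apply b))

open Kronecker in
lemma exp_kron_one {V₁ V₂ : Type*} [Fintype V₁] [DecidableEq V₁] [Fintype V₂]
    [DecidableEq V₂] (A : Matrix V₁ V₁ ℂ) :
    NormedSpace.exp (A ⊗ₖ (1 : Matrix V₂ V₂ ℂ)) = NormedSpace.exp A ⊗ₖ 1 := by
  letI : SeminormedRing (Matrix V₁ V₁ ℂ) := Matrix.linftyOpSemiNormedRing
  letI : NormedRing (Matrix V₁ V₁ ℂ) := Matrix.linftyOpNormedRing
  letI : NormedAlgebra ℂ (Matrix V₁ V₁ ℂ) := Matrix.linftyOpNormedAlgebra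
  letI : NormedAlgebra ℚ (Matrix V₁ V₁ ℂ) := NormedAlgebra.restrictScalars ℚ ℂ _
  letI : SeminormedRing (Matrix (V₁ × V₂) (V₁ × V₂) ℂ) := Matrix.linftyOpSemiNormedRing
  letI : NormedRing (Matrix (V₁ × V₂) (V₁ × V₂) ℂ) := Matrix.linftyOpNormedRing
  letI : NormedAlgebra ℂ (Matrix (V₁ × V₂) (V₁ × V₂) ℂ) := Matrix.linftyOpNormedAlgebra
  exact (NormedSpace.map_exp (kronRightRingHom V₁ V₂) continuous_kronRight A).symm

open Kronecker in
lemma exp_one_kron {V₁ V₂ : Type*} [Fintype V₁] [DecidableEq V₁] [Fintype V₂]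
    [DecidableEq V₂] (B : Matrix V₂ V₂ ℂ) :
    NormedSpace.exp ((1 : Matrix V₁ V₁ ℂ) ⊗ₖ B) = (1 : Matrix V₁ V₁ ℂ) ⊗ₖ NormedSpace.exp B := by
  letI : SeminormedRing (Matrix V₂ V₂ ℂ) := Matrix.linftyOpSemiNormedRing
  letI : NormedRing (Matrix V₂ V₂ ℂ) := Matrix.linftyOpNormedRing
  letI : NormedAlgebra ℂ (Matrix V₂ V₂ ℂ) := Matrix.linftyOpNormedAlgebra
  letI : NormedAlgebra ℚ (Matrix V₂ V₂ ℂ) := NormedAlgebra.restrictScalars ℚ ℂ _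
  letI : SeminormedRing (Matrix (V₁ × V₂) (V₁ × V₂) ℂ) := Matrix.linftyOpSemiNormedRing
  letI : NormedRing (Matrix (V₁ × V₂) (V₁ × V₂) ℂ) := Matrix.linftyOpNormedRing
  letI : NormedAlgebra ℂ (Matrix (V₁ × V₂) (V₁ × V₂) ℂ) := Matrix.linftyOpNormedAlgebra
  exact (NormedSpace.map_exp (kronLeftRingHom V₁ V₂) continuous_kronLeft B).symm

open SimpleGraph Kronecker in
lemma boxProd_ham_decomp {V₁ V₂ : Type*} [Fintype V₁] [DecidableEq V₁] [Fintype V₂]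
    [DecidableEq V₂] (G₁ : SimpleGraph V₁) (G₂ : SimpleGraph V₂)
    [DecidableRel G₁.Adj] [DecidableRel G₂.Adj] (q₁ : V₁ → ℝ) (q₂ : V₂ → ℝ) :
    ((G₁ □ G₂).adjMatrix ℝ +
        Matrix.diagonal (fun p : V₁ × V₂ => q₁ p.1 + q₂ p.2)).map Complex.ofReal =
      ((G₁.adjMatrix ℝ + Matrix.diagonal q₁).map Complex.ofReal) ⊗ₖ 1 +
        (1 : Matrix V₁ V₁ ℂ) ⊗ₖ ((G₂.adjMatrix ℝ + Matrix.diagonal q₂).map Complex.ofReal) := by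
  ext ⟨a, b⟩ ⟨c, d⟩
  simp only [Matrix.map_apply, Matrix.add_apply, Matrix.kroneckerMap_apply,
    SimpleGraph.adjMatrix_apply, SimpleGraph.boxProd_adj, Matrix.diagonal_apply,
    Matrix.one_apply, Prod.mk.injEq]
  by_cases hac : a = c <;> by_cases hbd : b = d <;>
    subst_vars <;>
    simp [G₁.irrefl, G₂.irrefl, Complex.ofReal_add, mul_comm] <;>
    split_ifs <;> simp_all

open SimpleGraph in
/-- If perfect state transfer occurs from `u` to `v` at time `T` in `G₁` with
potential `q₁`, and from `x` to `y` at the same time `T` in `G₂` with potential `q₂`, then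
in the Cartesian product `G₁ □ G₂` with potential `q(a,b) = q₁(a) + q₂(b)`, perfect state
transfer occurs from `(u,x)` to `(v,y)` at time `T`. -/
theorem pst_boxProd {V₁ V₂ : Type*} [Fintype V₁] [DecidableEq V₁] [Fintype V₂] [DecidableEq V₂]
    (G₁ : SimpleGraph V₁) (G₂ : SimpleGraph V₂) [DecidableRel G₁.Adj] [DecidableRel G₂.Adj]
    (q₁ : V₁ → ℝ) (q₂ : V₂ → ℝ) (u v : V₁) (x y : V₂) (T : ℝ)
    (h₁ : pst (G₁.adjMatrix ℝ + Matrix.diagonal q₁) u v T)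
    (h₂ : pst (G₂.adjMatrix ℝ + Matrix.diagonal q₂) x y T) :
    pst ((G₁ □ G₂).adjMatrix ℝ +
        Matrix.diagonal (fun p : V₁ × V₂ => q₁ p.1 + q₂ p.2))
      (u, x) (v, y) T := by
  classical
  unfold pst at *
  set c : ℂ := Complex.I * (T : ℂ)
  set M₁ : Matrix V₁ V₁ ℂ := c • (G₁.adjMatrix ℝ + Matrix.diagonal q₁).map Complex.ofReal with hM₁
  set M₂ : Matrix V₂ V₂ ℂ := c • (G₂.adjMatrix ℝ + Matrix.diagonal q₂).map Complex.ofReal with hM₂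
  have hdecomp :
      c • ((G₁ □ G₂).adjMatrix ℝ +
          Matrix.diagonal (fun p : V₁ × V₂ => q₁ p.1 + q₂ p.2)).map Complex.ofReal =
        Matrix.kroneckerMap (· * ·) M₁ (1 : Matrix V₂ V₂ ℂ) +
          Matrix.kroneckerMap (· * ·) (1 : Matrix V₁ V₁ ℂ) M₂ := by
    rw [boxProd_ham_decomp G₁ G₂ q₁ q₂, smul_add, hM₁, hM₂,
      ← Matrix.smul_kronecker, ← Matrix.kronecker_smul]
  have hcomm : Commute (Matrix.kroneckerMap (· * ·) M₁ (1 : Matrix V₂ V₂ ℂ))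
      (Matrix.kroneckerMap (· * ·) (1 : Matrix V₁ V₁ ℂ) M₂) := by
    unfold Commute SemiconjBy
    rw [← Matrix.mul_kronecker_mul, ← Matrix.mul_kronecker_mul]
    simp
  have hexp : NormedSpace.exp
      (c • ((G₁ □ G₂).adjMatrix ℝ +
          Matrix.diagonal (fun p : V₁ × V₂ => q₁ p.1 + q₂ p.2)).map Complex.ofReal) =
      Matrix.kroneckerMap (· * ·) (NormedSpace.exp M₁) (NormedSpace.exp M₂) := by
    rw [hdecomp, Matrix.exp_add_of_commute _ _ hcomm, exp_kron_one, exp_one_kron,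
      ← Matrix.mul_kronecker_mul]
    simp
  rw [hexp]
  have : Matrix.kroneckerMap (· * ·) (NormedSpace.exp M₁) (NormedSpace.exp M₂) (u, x) (v, y)
      = NormedSpace.exp M₁ u v * NormedSpace.exp M₂ x y := rfl
  rw [this, norm_mul, h₁, h₂, mul_one]
end

section
/- Let H be an n×n real symmetric matrix and u, v two indices. Suppose there is an orthonormal basis x_1,…,x_n of ℝ^n consisting of eigenvectors of H with eigenvalues λ_1,…,λ_n, such that for every i either x_i(u) = x_i(v) or x_i(u) = −x_i(v). Suppose further there exist T ∈ ℝ and θ ∈ ℝ such that for every i with x_i(u) ≠ 0: exp(i·T·λ_i) = exp(i·θ) whenever x_i(u) = x_i(v), and exp(i·T·λ_i) = −exp(i·θ) whenever x_i(u) = −x_i(v). Then perfect state transfer occurs from u to v at time T, i.e. |exp(i·T·H)_{u,v}| = 1. -/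
open Matrix

/-- sufficient spectral condition for perfect state transfer. -/
theorem pst_of_eigenvector_conditions (n : ℕ) (H : Matrix (Fin n) (Fin n) ℝ)
    (hH : H.IsSymm) (u v : Fin n)
    (x : Fin n → (Fin n → ℝ)) (lam : Fin n → ℝ)
    (heig : ∀ i, H.mulVec (x i) = lam i • x i)
    (hortho : ∀ i j, x i ⬝ᵥ x j = if i = j then (1 : ℝ) else 0)
    (hsym : ∀ i, x i u = x i v ∨ x i u = - x i v)
    (T θ : ℝ)
    (hphase : ∀ i, x i u ≠ 0 →
      (x i u = x i v →
        Complex.exp (Complex.I * (T : ℂ) * (lam i : ℂ)) = Complex.exp (Complex.I * (θ : ℂ))) ∧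
      (x i u = - x i v →
        Complex.exp (Complex.I * (T : ℂ) * (lam i : ℂ)) = - Complex.exp (Complex.I * (θ : ℂ)))) :
    pst H u v T := by
  classical
  set P : Matrix (Fin n) (Fin n) ℝ := Matrix.of (fun i j => x i j) with hP
  have hPPT : P * Pᵀ = 1 := by
    ext i j
    simp only [Matrix.mul_apply, Matrix.one_apply, hP, Matrix.of_apply, Matrix.transpose_apply]
    simpa [dotProduct] using hortho i j
  have hPTP : Pᵀ * P = 1 := mul_eq_one_comm.mp hPPT
  have hHPT : H * Pᵀ = Pᵀ * Matrix.diagonal lam := by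
    ext j i
    have hthis := congrFun (heig i) j
    simp only [Matrix.mulVec, dotProduct, Pi.smul_apply, smul_eq_mul] at hthis
    rw [Matrix.mul_diagonal]
    simp only [Matrix.mul_apply, Matrix.transpose_apply, hP, Matrix.of_apply]
    rw [hthis]; ring
  have hHdecomp : H = Pᵀ * Matrix.diagonal lam * P := by
    calc H = H * (Pᵀ * P) := by rw [hPTP, mul_one]
    _ = H * Pᵀ * P := by rw [mul_assoc]
    _ = Pᵀ * Matrix.diagonal lam * P := by rw [hHPT]
  set Q : Matrix (Fin n) (Fin n) ℂ := P.map Complex.ofReal with hQ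
  have hQQT : Q * Qᵀ = 1 := by
    ext i j
    have hthis := hortho i j
    simp only [dotProduct] at hthis
    simp only [Matrix.mul_apply, Matrix.transpose_apply, hQ, Matrix.map_apply, hP,
      Matrix.of_apply, Matrix.one_apply]
    rw [show (∑ k, ((x i k : ℂ) * (x j k : ℂ))) = ((∑ k, x i k * x j k : ℝ) : ℂ) by
      push_cast; ring, hthis]
    split <;> norm_num
  have hQTQ : Qᵀ * Q = 1 := mul_eq_one_comm.mp hQQT
  have hQTinv : Qᵀ⁻¹ = Q := Matrix.inv_eq_right_inv hQTQ
  have hQTunit : IsUnit Qᵀ := by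
    apply Matrix.isUnit_iff_isUnit_det _ |>.mpr
    apply IsUnit.of_mul_eq_one (Q.det)
    rw [← Matrix.det_mul, hQTQ, Matrix.det_one]
  have hmapdec : H.map Complex.ofReal = Qᵀ * Matrix.diagonal (fun i => (lam i : ℂ)) * Q := by
    ext a b
    rw [hHdecomp]
    simp only [Matrix.map_apply, Matrix.mul_apply, Matrix.diagonal_apply,
      Matrix.transpose_apply, hQ, hP, Matrix.of_apply, mul_ite, mul_zero, ite_mul, zero_mul,
      Finset.sum_ite_eq, Finset.sum_ite_eq', Finset.mem_univ, if_true]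
    push_cast
    ring_nf
  have hmap : (Complex.I * (T : ℂ)) • H.map Complex.ofReal
      = Qᵀ * Matrix.diagonal (fun i => Complex.I * (T : ℂ) * (lam i : ℂ)) * Q := by
    rw [hmapdec, ← Matrix.smul_mul, ← Matrix.mul_smul, ← Matrix.diagonal_smul]
    have : ((Complex.I * (T : ℂ)) • fun i => (lam i : ℂ)) = fun i => Complex.I * (T : ℂ) * (lam i : ℂ) := by
      ext i; simp
    rw [this]
  have hexp : NormedSpace.exp ((Complex.I * (T : ℂ)) • H.map Complex.ofReal)
      = Qᵀ * Matrix.diagonal (fun i => Complex.exp (Complex.I * (T : ℂ) * (lam i : ℂ))) * Q := by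
    rw [hmap]
    have h2 := Matrix.exp_conj Qᵀ
      (Matrix.diagonal (fun i => Complex.I * (T : ℂ) * (lam i : ℂ))) hQTunit
    rw [hQTinv] at h2
    rw [h2, Matrix.exp_diagonal]
    congr 2
    rw [Pi.exp_def]
    ext i
    simp [Complex.exp_eq_exp_ℂ]
  have hentry : (Qᵀ * Matrix.diagonal (fun i => Complex.exp (Complex.I * (T : ℂ) * (lam i : ℂ))) * Q) u v
      = ∑ i, Complex.exp (Complex.I * (T : ℂ) * (lam i : ℂ)) * (x i u : ℂ) * (x i v : ℂ) := by
    simp only [Matrix.mul_apply, Matrix.diagonal_apply, Matrix.transpose_apply, hQ,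
      Matrix.map_apply, hP, Matrix.of_apply, mul_ite, mul_zero, ite_mul, zero_mul,
      Finset.sum_ite_eq, Finset.sum_ite_eq', Finset.mem_univ, if_true]
    exact Finset.sum_congr rfl fun i _ => by ring
  have hterm : ∀ i, Complex.exp (Complex.I * (T : ℂ) * (lam i : ℂ)) * (x i u : ℂ) * (x i v : ℂ)
      = Complex.exp (Complex.I * (θ : ℂ)) * (x i u : ℂ) ^ 2 := by
    intro i
    by_cases h0 : x i u = 0
    · rw [h0]; push_cast; ring
    · rcases hsym i with h | h
      · rw [(hphase i h0).1 h, ← h]; ring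
      · rw [(hphase i h0).2 h, h]; push_cast; ring
  have hsum2 : (∑ i, (x i u : ℂ) ^ 2) = 1 := by
    have hr : (∑ i, (x i u) ^ 2) = (1 : ℝ) := by
      have hthis := congrFun (congrFun hPTP u) u
      simp only [Matrix.mul_apply, Matrix.one_apply_eq, hP, Matrix.of_apply,
        Matrix.transpose_apply] at hthis
      rw [← hthis]
      exact Finset.sum_congr rfl fun i _ => sq (x i u)
    calc (∑ i, (x i u : ℂ) ^ 2) = ((∑ i, (x i u) ^ 2 : ℝ) : ℂ) := by push_cast; ring
    _ = 1 := by rw [hr]; norm_num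
  unfold pst
  rw [hexp, hentry]
  rw [show (∑ i, Complex.exp (Complex.I * (T : ℂ) * (lam i : ℂ)) * (x i u : ℂ) * (x i v : ℂ))
      = ∑ i, Complex.exp (Complex.I * (θ : ℂ)) * (x i u : ℂ) ^ 2 from
      Finset.sum_congr rfl fun i _ => hterm i]
  rw [← Finset.mul_sum, hsum2, mul_one, Complex.norm_exp]
  simp
end

section
/- Let H be an n×n real symmetric matrix and u, v two indices, and suppose perfect state transfer occurs from u to v at some time T ∈ ℝ. Then every real eigenvector x of H satisfies x(u) = x(v) or x(u) = −x(v). -/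
open Matrix


lemma exp_mulVec_eig {n : ℕ} (A : Matrix (Fin n) (Fin n) ℂ) (y : Fin n → ℂ) (c : ℂ)
    (h : A.mulVec y = c • y) :
    (NormedSpace.exp A).mulVec y = Complex.exp c • y := by
  letI : NormedRing (Matrix (Fin n) (Fin n) ℂ) := Matrix.linftyOpNormedRing
  letI : NormedAlgebra ℂ (Matrix (Fin n) (Fin n) ℂ) := Matrix.linftyOpNormedAlgebra
  have hpow : ∀ k : ℕ, (A ^ k).mulVec y = c ^ k • y := by
    intro k
    induction k with
    | zero => simp
    | succ k ih =>
      rw [pow_succ', pow_succ', ← Matrix.mulVec_mulVec, ih, Matrix.mulVec_smul, h, smul_smul,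
        mul_comm]
  have hsum : Summable (fun k : ℕ => ((k.factorial : ℂ))⁻¹ • A ^ k) :=
    NormedSpace.expSeries_summable' A
  have hsumc : Summable (fun k : ℕ => ((k.factorial : ℂ))⁻¹ • c ^ k) :=
    NormedSpace.expSeries_summable' c
  let L : Matrix (Fin n) (Fin n) ℂ →ₗ[ℂ] (Fin n → ℂ) :=
    { toFun := fun B => B.mulVec y
      map_add' := fun B C => Matrix.add_mulVec B C y
      map_smul' := fun a B => Matrix.smul_mulVec a B y }
  have hL : Continuous L := L.continuous_of_finiteDimensional
  have key : (NormedSpace.exp A).mulVec y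
      = ∑' k : ℕ, ((k.factorial : ℂ))⁻¹ • (A ^ k).mulVec y := by
    rw [NormedSpace.exp_eq_tsum ℂ]
    have h1 := (hsum.hasSum.map L hL)
    have h1' : HasSum (fun k : ℕ => ((k.factorial : ℂ))⁻¹ • (A ^ k).mulVec y)
        ((∑' b : ℕ, ((b.factorial : ℂ))⁻¹ • A ^ b).mulVec y) := by
      simpa [Function.comp_def, L, Matrix.smul_mulVec] using h1
    exact h1'.tsum_eq.symm
  rw [key]
  simp_rw [hpow, smul_smul]
  rw [Summable.tsum_smul_const]
  · congr 1
    rw [Complex.exp_eq_exp_ℂ, NormedSpace.exp_eq_tsum ℂ]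
    simp [smul_eq_mul]
  · simpa [smul_eq_mul] using hsumc


/-- if perfect state transfer occurs from `u` to `v`, then every real
eigenvector `x` of `H` satisfies `x u = x v` or `x u = -x v`. -/
theorem eigenvector_symmetry_of_pst (n : ℕ) (H : Matrix (Fin n) (Fin n) ℝ)
    (hH : H.IsSymm) (u v : Fin n) (T : ℝ) (hpst : pst H u v T)
    (x : Fin n → ℝ) (lam : ℝ) (hx : x ≠ 0) (heig : H.mulVec x = lam • x) :
    x u = x v ∨ x u = - x v := by
  unfold pst at hpst
  classical
  set M : Matrix (Fin n) (Fin n) ℂ := H.map Complex.ofReal with hM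
  set A := (Complex.I * (T : ℂ)) • M with hA
  set U := NormedSpace.exp A with hU
  have hMsymm : Mᵀ = M := by
    ext i j
    simp only [Matrix.transpose_apply, hM, Matrix.map_apply]
    exact_mod_cast hH.apply i j
  have hMherm : Mᴴ = M := by
    ext i j
    simp only [Matrix.conjTranspose_apply, hM, Matrix.map_apply, Complex.star_def,
      Complex.conj_ofReal]
    exact_mod_cast hH.apply i j
  have hAT : Aᵀ = A := by rw [hA, Matrix.transpose_smul, hMsymm]
  have hAH : Aᴴ = -A := by
    rw [hA, Matrix.conjTranspose_smul, hMherm]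
    have : star (Complex.I * (T : ℂ)) = -(Complex.I * (T : ℂ)) := by
      simp [Complex.star_def, Complex.conj_ofReal]
    rw [this, neg_smul]
  have hUsymm : Uᵀ = U := by rw [hU, ← Matrix.exp_transpose, hAT]
  have hUnit : Uᴴ * U = 1 := by
    rw [hU, ← Matrix.exp_conjTranspose, hAH,
      ← Matrix.exp_add_of_commute (-A) A ((Commute.refl A).neg_left), neg_add_cancel,
      NormedSpace.exp_zero]
  have hcol : ∑ j, Complex.normSq (U j u) = 1 := by
    have h1 := congrFun (congrFun hUnit u) u
    simp only [Matrix.mul_apply, Matrix.conjTranspose_apply, Matrix.one_apply_eq] at h1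
    have h2 : ∑ j, (Complex.normSq (U j u) : ℂ) = 1 := by
      rw [← h1]
      refine Finset.sum_congr rfl fun j _ => ?_
      rw [mul_comm (star (U j u))]; exact (Complex.mul_conj (U j u)).symm
    exact_mod_cast h2
  have hsymUvu : U v u = U u v := by
    have := congrFun (congrFun hUsymm u) v
    simpa using this
  have habsvu : ‖U v u‖ = 1 := by rw [hsymUvu]; exact hpst
  have hnsvu : Complex.normSq (U v u) = 1 := by
    rw [← Complex.sq_norm, habsvu, one_pow]
  have hzero : ∀ j, j ≠ v → U j u = 0 := by
    rw [← Finset.add_sum_erase _ _ (Finset.mem_univ v), hnsvu] at hcol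
    have hsplit := hcol
    have hzsum : ∑ j ∈ Finset.univ.erase v, Complex.normSq (U j u) = 0 := by linarith
    intro j hj
    have := (Finset.sum_eq_zero_iff_of_nonneg
      (fun j _ => Complex.normSq_nonneg (U j u))).mp hzsum j
      (Finset.mem_erase.mpr ⟨hj, Finset.mem_univ j⟩)
    exact Complex.normSq_eq_zero.mp this
  set y : Fin n → ℂ := fun j => (x j : ℂ) with hy
  have hMy : M.mulVec y = (lam : ℂ) • y := by
    ext j
    have h0 := congrFun heig j
    simp only [Matrix.mulVec, dotProduct, Pi.smul_apply, smul_eq_mul] at h0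
    simp only [Matrix.mulVec, dotProduct, Pi.smul_apply, smul_eq_mul, hM, hy,
      Matrix.map_apply]
    push_cast
    exact_mod_cast congrArg Complex.ofReal h0
  have hAy : A.mulVec y = (Complex.I * T * lam) • y := by
    rw [hA, Matrix.smul_mulVec, hMy, smul_smul]
  have hUy : U.mulVec y = Complex.exp (Complex.I * T * lam) • y :=
    exp_mulVec_eig A y _ hAy
  have h1 : (U.mulVec y) u = Complex.exp (Complex.I * T * lam) * (x u) := by
    rw [hUy]; simp [hy]
  have h2 : (U.mulVec y) u = U v u * (x v) := by
    simp only [Matrix.mulVec, dotProduct]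
    rw [Finset.sum_eq_single v]
    · rw [← hsymUvu]
    · intro j _ hj
      have he : U u j = 0 := by
        have e : U u j = U j u := by
          have := congrFun (congrFun hUsymm j) u; simpa using this
        rw [e]; exact hzero j hj
      rw [he, zero_mul]
    · intro h; exact absurd (Finset.mem_univ v) h
  have habs := congrArg norm (h1.symm.trans h2)
  rw [norm_mul, norm_mul, habsvu, Complex.norm_exp] at habs
  have hre : (Complex.I * T * lam).re = 0 := by simp
  rw [hre, Real.exp_zero, one_mul, one_mul, Complex.norm_real, Complex.norm_real] at habs
  exact abs_eq_abs.mp habs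
end

section
/- For n ≥ 1 and real numbers Q_1,…,Q_n, let L_{2n} = det(x·I_{2n} − H_{2n}) be the characteristic polynomial of the Hamiltonian H_{2n} of the path P_{2n} with symmetric potential (Q_1,…,Q_n,Q_n,…,Q_1). Then L_{2n}(x) = (p_n(x; Q_1,…,Q_{n−1},Q_n+1)) · (p_n(x; Q_1,…,Q_{n−1},Q_n−1)), equivalently L_{2n} = (p_n + p_{n−1})(p_n − p_{n−1}) where p_k = p_k(x; Q_1,…,Q_k). Moreover, the roots of p_n + p_{n−1} are eigenvalues of H_{2n} admitting eigenvectors f with f(1) = −f(2n) ≠ 0, and the roots of p_n − p_{n−1} are eigenvalues admitting eigenvectors f with f(1) = f(2n) ≠ 0. -/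
open Matrix

/-- `p_m(x; Q_1, …, Q_m) = det (x·I − H_m)`, the characteristic polynomial (evaluated at `x`)
of the Hamiltonian of the path on `m` vertices with potential `Q 0, …, Q (m-1)`. -/
noncomputable def pathCharFun (m : ℕ) (Q : ℕ → ℝ) (x : ℝ) : ℝ :=
  (x • (1 : Matrix (Fin m) (Fin m) ℝ) - pathHam m (fun i => Q i.val)).det

noncomputable def charMat (m : ℕ) (Q : ℕ → ℝ) (x : ℝ) : Matrix (Fin m) (Fin m) ℝ :=
  x • (1 : Matrix (Fin m) (Fin m) ℝ) - pathHam m (fun i => Q i.val)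

lemma charMat_apply (m : ℕ) (Q : ℕ → ℝ) (x : ℝ) (j k : Fin m) :
    charMat m Q x j k = if (j:ℕ) = (k:ℕ) then x - Q j.val
      else if (j : ℕ) + 1 = (k : ℕ) ∨ (k : ℕ) + 1 = (j : ℕ) then -1 else 0 := by
  simp only [charMat, pathHam, pathAdj, Matrix.sub_apply, Matrix.add_apply, Matrix.smul_apply,
    Matrix.one_apply, Matrix.diagonal_apply, Matrix.of_apply, Fin.ext_iff, smul_eq_mul]
  split_ifs <;> simp_all

lemma pathCharFun_eq (m : ℕ) (Q : ℕ → ℝ) (x : ℝ) :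
    pathCharFun m Q x = (charMat m Q x).det := rfl

lemma pathCharFun_zero (Q : ℕ → ℝ) (x : ℝ) : pathCharFun 0 Q x = 1 := by
  simp [pathCharFun]

lemma pathCharFun_one (Q : ℕ → ℝ) (x : ℝ) : pathCharFun 1 Q x = x - Q 0 := by
  rw [pathCharFun_eq, Matrix.det_fin_one, charMat_apply]
  simp

lemma pathCharFun_congr (m : ℕ) {Q₁ Q₂ : ℕ → ℝ} (x : ℝ) (h : ∀ i < m, Q₁ i = Q₂ i) :
    pathCharFun m Q₁ x = pathCharFun m Q₂ x := by
  unfold pathCharFun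
  have : (fun i : Fin m => Q₁ i.val) = fun i : Fin m => Q₂ i.val := by
    funext i; exact h i i.isLt
  rw [this]

lemma charMat_submatrix (m : ℕ) (Q : ℕ → ℝ) (x : ℝ) :
    (charMat (m+1) Q x).submatrix Fin.castSucc Fin.castSucc = charMat m Q x := by
  ext j k
  simp only [Matrix.submatrix_apply, charMat_apply, Fin.coe_castSucc]

lemma pathCharFun_rec (m : ℕ) (Q : ℕ → ℝ) (x : ℝ) :
    pathCharFun (m+2) Q x =
      (x - Q (m+1)) * pathCharFun (m+1) Q x - pathCharFun m Q x := by
  rw [pathCharFun_eq, Matrix.det_succ_row (charMat (m+2) Q x) (Fin.last (m+1))]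
  rw [Fin.sum_univ_castSucc, Fin.sum_univ_castSucc]
  have hzero : ∀ j : Fin m,
      (-1 : ℝ) ^ ((Fin.last (m+1) : ℕ) + ((j.castSucc.castSucc : Fin (m+2)) : ℕ)) *
        charMat (m+2) Q x (Fin.last (m+1)) j.castSucc.castSucc *
        ((charMat (m+2) Q x).submatrix (Fin.last (m+1)).succAbove
          (j.castSucc.castSucc).succAbove).det = 0 := by
    intro j
    have h1 : charMat (m+2) Q x (Fin.last (m+1)) j.castSucc.castSucc = 0 := by
      rw [charMat_apply]
      have := j.isLt
      simp only [Fin.val_last, Fin.coe_castSucc]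
      rw [if_neg (by omega), if_neg (by omega)]
    rw [h1]; ring
  rw [Finset.sum_eq_zero (fun j _ => hzero j), zero_add]
  -- the j = m term
  have hmid : charMat (m+2) Q x (Fin.last (m+1)) ((Fin.last m).castSucc) = -1 := by
    rw [charMat_apply]
    simp only [Fin.val_last, Fin.coe_castSucc]
    rw [if_neg (by omega), if_pos (by simp)]
  have hlast : charMat (m+2) Q x (Fin.last (m+1)) (Fin.last (m+1)) = x - Q (m+1) := by
    rw [charMat_apply]
    rw [if_pos rfl]
    rfl
  -- identify the last submatrix
  have hsubLast : (charMat (m+2) Q x).submatrix (Fin.last (m+1)).succAbove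
      (Fin.last (m+1)).succAbove = charMat (m+1) Q x := by
    rw [Fin.succAbove_last]
    exact charMat_submatrix (m+1) Q x
  -- the middle submatrix: expand along last column
  set j₀ : Fin (m+2) := (Fin.last m).castSucc with hj₀
  have hj₀v : (j₀ : ℕ) = m := rfl
  set B : Matrix (Fin (m+1)) (Fin (m+1)) ℝ :=
    (charMat (m+2) Q x).submatrix (Fin.last (m+1)).succAbove j₀.succAbove with hB
  have hBdet : B.det = - pathCharFun m Q x := by
    rw [Matrix.det_succ_column B (Fin.last m)]
    rw [Fin.sum_univ_castSucc]
    have hz : ∀ i : Fin m,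
        (-1 : ℝ) ^ (((i.castSucc : Fin (m+1)) : ℕ) + ((Fin.last m : Fin (m+1)) : ℕ)) *
          B i.castSucc (Fin.last m) *
          (B.submatrix (i.castSucc).succAbove (Fin.last m).succAbove).det = 0 := by
      intro i
      have hBe : B i.castSucc (Fin.last m) = 0 := by
        rw [hB]
        simp only [Matrix.submatrix_apply]
        rw [Fin.succAbove_last]
        have h2 : j₀.succAbove (Fin.last m) = Fin.last (m+1) := by
          rw [Fin.succAbove_of_le_castSucc _ _ (le_refl _)]
          rfl
        rw [h2, charMat_apply]
        have := i.isLt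
        simp only [Fin.coe_castSucc, Fin.val_last]
        rw [if_neg (by omega), if_neg (by omega)]
      rw [hBe]; ring
    rw [Finset.sum_eq_zero (fun i _ => hz i), zero_add]
    have hBe2 : B (Fin.last m) (Fin.last m) = -1 := by
      rw [hB]
      simp only [Matrix.submatrix_apply]
      rw [Fin.succAbove_last]
      have h2 : j₀.succAbove (Fin.last m) = Fin.last (m+1) := by
        rw [Fin.succAbove_of_le_castSucc _ _ (le_refl _)]
        rfl
      rw [h2, charMat_apply]
      simp only [Fin.coe_castSucc, Fin.val_last]
      rw [if_neg (by omega), if_pos (by simp)]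
    have hBsub : B.submatrix (Fin.last m).succAbove (Fin.last m).succAbove
        = charMat m Q x := by
      rw [Fin.succAbove_last, hB]
      ext j k
      simp only [Matrix.submatrix_apply]
      have h3 : j₀.succAbove k.castSucc = (k.castSucc).castSucc := by
        apply Fin.succAbove_of_castSucc_lt
        simp only [Fin.lt_def, Fin.coe_castSucc, hj₀v]
        exact k.isLt
      rw [h3, Fin.succAbove_last]
      simp only [charMat_apply, Fin.coe_castSucc]
    rw [hBe2, hBsub, ← pathCharFun_eq]
    simp only [Fin.val_last]
    rw [← two_mul, pow_mul]
    simp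
  rw [hsubLast, hmid, hlast, hBdet, ← pathCharFun_eq]
  simp only [Fin.val_last, Fin.coe_castSucc, hj₀v]
  have : (-1 : ℝ) ^ (m + 1 + m) = -1 := by
    have : m + 1 + m = 2*m+1 := by omega
    rw [this, pow_succ, pow_mul]
    simp
  rw [this]
  have h2 : (-1 : ℝ) ^ (m + 1 + (m+1)) = 1 := by
    have : m + 1 + (m+1) = 2*(m+1) := by omega
    rw [this, pow_mul]; simp
  rw [h2]
  ring

lemma pathCharFun_shift (m : ℕ) (Q : ℕ → ℝ) (c x : ℝ) :
    pathCharFun (m+1) (fun i => Q i + if i = m then c else 0) x =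
      pathCharFun (m+1) Q x - c * pathCharFun m Q x := by
  set Q' : ℕ → ℝ := fun i => Q i + if i = m then c else 0 with hQ'
  have hlow : ∀ i < m, Q' i = Q i := by
    intro i hi
    simp [hQ', Nat.ne_of_lt hi]
  cases m with
  | zero =>
    rw [pathCharFun_one, pathCharFun_one, pathCharFun_zero]
    simp [hQ']
    ring
  | succ k =>
    rw [pathCharFun_rec, pathCharFun_rec]
    rw [pathCharFun_congr (k+1) x hlow, pathCharFun_congr k x (fun i hi => hlow i (by omega))]
    have : Q' (k+1) = Q (k+1) + c := by simp [hQ']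
    rw [this]
    ring

lemma pathHam_mulVec (m : ℕ) (q : Fin m → ℝ) (f : Fin m → ℝ) (i : Fin m) :
    (pathHam m q).mulVec f i =
      (if h : (i:ℕ)+1 < m then f ⟨(i:ℕ)+1, h⟩ else 0) +
      (if h : 0 < (i:ℕ) then f ⟨(i:ℕ)-1, by omega⟩ else 0) + q i * f i := by
  unfold Matrix.mulVec dotProduct pathHam pathAdj
  simp only [Matrix.add_apply, Matrix.of_apply, Matrix.diagonal_apply, add_mul]
  rw [Finset.sum_add_distrib]
  congr 1
  · have step : ∀ j : Fin m,
        (if (i:ℕ)+1 = (j:ℕ) ∨ (j:ℕ)+1 = (i:ℕ) then (1:ℝ) else 0) * f j =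
        (if (i:ℕ)+1 = (j:ℕ) then f j else 0) + (if (j:ℕ)+1 = (i:ℕ) then f j else 0) := by
      intro j
      rcases Nat.lt_trichotomy (i:ℕ) (j:ℕ) with h | h | h <;> split_ifs <;> simp_all <;> omega
    rw [Finset.sum_congr rfl (fun j _ => step j), Finset.sum_add_distrib]
    congr 1
    · by_cases h : (i:ℕ)+1 < m
      · rw [dif_pos h]
        rw [Finset.sum_eq_single (⟨(i:ℕ)+1, h⟩ : Fin m)]
        · simp
        · intro j _ hj
          rw [if_neg]
          intro hc
          exact hj (Fin.ext hc.symm)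
        · simp
      · rw [dif_neg h]
        apply Finset.sum_eq_zero
        intro j _
        rw [if_neg]
        intro hc
        exact h (hc ▸ j.isLt)
    · by_cases h : 0 < (i:ℕ)
      · rw [dif_pos h]
        rw [Finset.sum_eq_single (⟨(i:ℕ)-1, by omega⟩ : Fin m)]
        · simp; omega
        · intro j _ hj
          rw [if_neg]
          intro hc
          refine hj (Fin.ext ?_)
          simp only [Fin.val_mk] at *
          omega
        · simp
      · rw [dif_neg h]
        apply Finset.sum_eq_zero
        intro j _
        rw [if_neg]
        omega
  · rw [Finset.sum_eq_single i]
    · simp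
    · intro j _ hj
      rw [if_neg (fun hc => hj hc.symm), zero_mul]
    · simp

lemma eig_lemma (k : ℕ) (Q : ℕ → ℝ) (σ lam : ℝ) (hσ : σ * σ = 1)
    (h : pathCharFun (k+1) Q lam = σ * pathCharFun k Q lam) :
    ∃ f : Fin (2*(k+1)) → ℝ,
      (pathHam (2*(k+1)) (fun i => Q (min (i:ℕ) (2*(k+1)-1-(i:ℕ))))).mulVec f = lam • f ∧
      f ⟨0, by omega⟩ = σ * f ⟨2*(k+1)-1, by omega⟩ ∧ f ⟨0, by omega⟩ ≠ 0 := by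
  set g : ℕ → ℝ := fun j => pathCharFun j Q lam with hg
  have g0 : g 0 = 1 := pathCharFun_zero Q lam
  have g1 : g 1 = lam - Q 0 := pathCharFun_one Q lam
  have grec : ∀ j : ℕ, g (j+2) = (lam - Q (j+1)) * g (j+1) - g j :=
    fun j => pathCharFun_rec j Q lam
  have h' : g (k+1) = σ * g k := h
  have hgk : g k = σ * g (k+1) := by
    rw [h', ← mul_assoc, hσ, one_mul]
  set f : Fin (2*(k+1)) → ℝ :=
    fun i => if (i:ℕ) ≤ k then g i else σ * g (2*k+1 - (i:ℕ)) with hf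
  have hf0 : f ⟨0, by omega⟩ = 1 := by
    rw [hf]; simp [g0]
  have hflast : f ⟨2*(k+1)-1, by omega⟩ = σ := by
    rw [hf]
    simp only [Fin.val_mk]
    rw [if_neg (by omega)]
    have : 2*k+1 - (2*(k+1)-1) = 0 := by omega
    rw [this, g0, mul_one]
  refine ⟨f, ?_, by rw [hf0, hflast, hσ], by rw [hf0]; norm_num⟩
  funext i
  rw [pathHam_mulVec]
  simp only [Pi.smul_apply, smul_eq_mul]
  have hiv := i.isLt
  rcases Nat.lt_or_ge (i:ℕ) k with hv | hv
  · -- i.val < k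
    have e1 : (if h : (i:ℕ)+1 < 2*(k+1) then f ⟨(i:ℕ)+1, h⟩ else 0) = g ((i:ℕ)+1) := by
      rw [dif_pos (by omega), hf]
      simp only [Fin.val_mk]
      rw [if_pos (by omega)]
    have e3 : f i = g (i:ℕ) := by rw [hf]; simp only; rw [if_pos (by omega)]
    have hmin : min (i:ℕ) (2*(k+1)-1-(i:ℕ)) = (i:ℕ) := by omega
    rcases Nat.eq_zero_or_pos (i:ℕ) with h0 | h0
    · rw [e1, e3, dif_neg (by omega), hmin, h0, g0, g1]
      ring
    · obtain ⟨w, hw⟩ : ∃ w, (i:ℕ) = w + 1 := ⟨(i:ℕ)-1, by omega⟩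
      have e2 : (if h : 0 < (i:ℕ) then f ⟨(i:ℕ)-1, by omega⟩ else 0) = g ((i:ℕ)-1) := by
        rw [dif_pos h0, hf]
        simp only [Fin.val_mk]
        rw [if_pos (by omega)]
      rw [e1, e2, e3, hmin, hw]
      have : w + 1 - 1 = w := by omega
      rw [this]
      linear_combination grec w
  rcases Nat.eq_or_lt_of_le hv with hv | hv'
  · -- i.val = k
    have e1 : (if h : (i:ℕ)+1 < 2*(k+1) then f ⟨(i:ℕ)+1, h⟩ else 0) = σ * g k := by
      rw [dif_pos (by omega), hf]
      simp only [Fin.val_mk]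
      rw [if_neg (by omega)]
      have : 2*k+1 - ((i:ℕ)+1) = k := by omega
      rw [this]
    have e3 : f i = g k := by
      rw [hf]; simp only; rw [if_pos (by omega), ← hv]
    have hmin : min (i:ℕ) (2*(k+1)-1-(i:ℕ)) = k := by omega
    rw [e1, e3, hmin, ← h']
    rcases Nat.eq_zero_or_pos k with h0 | h0
    · rw [dif_neg (by omega), h0, g0, g1]
      ring
    · obtain ⟨w, hw⟩ : ∃ w, k = w + 1 := ⟨k-1, by omega⟩
      have e2 : (if h : 0 < (i:ℕ) then f ⟨(i:ℕ)-1, by omega⟩ else 0) = g (k-1) := by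
        rw [dif_pos (by omega), hf]
        simp only [Fin.val_mk]
        rw [if_pos (by omega)]
        congr 1
        omega
      rw [e2, hw]
      have : w + 1 - 1 = w := by omega
      rw [this]
      linear_combination grec w
  rcases Nat.eq_or_lt_of_le hv' with hv2 | hv2
  · -- i.val = k+1
    have e2 : (if h : 0 < (i:ℕ) then f ⟨(i:ℕ)-1, by omega⟩ else 0) = g k := by
      rw [dif_pos (by omega), hf]
      simp only [Fin.val_mk]
      rw [if_pos (by omega)]
      congr 1
      omega
    have e3 : f i = σ * g k := by
      rw [hf]; simp only; rw [if_neg (by omega)]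
      congr 2
      omega
    have hmin : min (i:ℕ) (2*(k+1)-1-(i:ℕ)) = k := by omega
    rw [e2, e3, hmin]
    rcases Nat.eq_zero_or_pos k with h0 | h0
    · rw [dif_neg (by omega)]
      subst h0
      rw [g0, g1] at *
      linear_combination hgk
    · obtain ⟨w, hw⟩ : ∃ w, k = w + 1 := ⟨k-1, by omega⟩
      subst hw
      have e1 : (if h : (i:ℕ)+1 < 2*(w+1+1) then f ⟨(i:ℕ)+1, h⟩ else 0) = σ * g w := by
        rw [dif_pos (by omega), hf]
        simp only [Fin.val_mk]
        rw [if_neg (by omega)]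
        have : 2*(w+1)+1 - ((i:ℕ)+1) = w := by omega
        rw [this]
      rw [e1]
      linear_combination hgk + σ * grec w
  · -- i.val ≥ k+2
    set w : ℕ := 2*k+1 - (i:ℕ) with hwdef
    have hwk : w ≤ k - 1 ∧ w < k := by constructor <;> omega
    have e2 : (if h : 0 < (i:ℕ) then f ⟨(i:ℕ)-1, by omega⟩ else 0) = σ * g (w+1) := by
      rw [dif_pos (by omega), hf]
      simp only [Fin.val_mk]
      rw [if_neg (by omega)]
      congr 2
      omega
    have e3 : f i = σ * g w := by
      rw [hf]; simp only; rw [if_neg (by omega)]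
    have hmin : min (i:ℕ) (2*(k+1)-1-(i:ℕ)) = w := by omega
    rw [e2, e3, hmin]
    rcases Nat.eq_zero_or_pos w with h0 | h0
    · have hiv2 : (i:ℕ) = 2*k+1 := by omega
      rw [dif_neg (by omega), h0, g0, g1]
      ring
    · obtain ⟨u, hu⟩ : ∃ u, w = u + 1 := ⟨w-1, by omega⟩
      have e1 : (if h : (i:ℕ)+1 < 2*(k+1) then f ⟨(i:ℕ)+1, h⟩ else 0) = σ * g (w-1) := by
        rw [dif_pos (by omega), hf]
        simp only [Fin.val_mk]
        rw [if_neg (by omega)]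
        have hh : 2*k+1 - ((i:ℕ)+1) = w - 1 := by omega
        rw [hh]
      rw [e1, hu]
      have : u + 1 - 1 = u := by omega
      rw [this]
      linear_combination σ * grec u

lemma det_fromBlocks_symm {n : ℕ} (A B : Matrix (Fin n) (Fin n) ℝ) :
    (Matrix.fromBlocks A B B A).det = (A + B).det * (A - B).det := by
  have key : Matrix.fromBlocks A B B A =
      Matrix.fromBlocks (1 : Matrix (Fin n) (Fin n) ℝ) (-1) 0 1 *
        Matrix.fromBlocks (A + B) 0 B (A - B) *
        Matrix.fromBlocks (1 : Matrix (Fin n) (Fin n) ℝ) 1 0 1 := by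
    rw [Matrix.fromBlocks_multiply, Matrix.fromBlocks_multiply]
    refine Matrix.fromBlocks_inj.mpr ⟨?_, ?_, ?_, ?_⟩ <;> noncomm_ring
  rw [key, Matrix.det_mul, Matrix.det_mul, Matrix.det_fromBlocks_zero₂₁,
    Matrix.det_fromBlocks_zero₁₂, Matrix.det_fromBlocks_zero₂₁]
  simp

def halfEquiv (n : ℕ) (hn : 1 ≤ n) : (Fin n ⊕ Fin n) ≃ Fin (2 * n) where
  toFun := Sum.elim (fun j => ⟨(j : ℕ), by have := j.isLt; omega⟩)
    (fun j => ⟨2 * n - 1 - (j : ℕ), by have := j.isLt; omega⟩)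
  invFun := fun i => if h : (i : ℕ) < n then Sum.inl ⟨(i : ℕ), h⟩
    else Sum.inr ⟨2 * n - 1 - (i : ℕ), by have := i.isLt; omega⟩
  left_inv := by
    rintro (j | j) <;> have hj := j.isLt <;> simp only [Sum.elim_inl, Sum.elim_inr]
    · exact dif_pos hj
    · refine (dif_neg (show ¬ (2 * n - 1 - (j : ℕ) < n) by omega)).trans ?_
      congr 1
      apply Fin.ext
      simp only [Fin.val_mk]
      omega
  right_inv := by
    intro i
    have hi := i.isLt
    dsimp only
    by_cases h : (i : ℕ) < n
    · rw [dif_pos h]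
      rfl
    · rw [dif_neg h]
      simp only [Sum.elim_inr]
      apply Fin.ext
      simp only [Fin.val_mk]
      omega

lemma charpoly_factor (n : ℕ) (hn : 1 ≤ n) (Q : ℕ → ℝ) (x : ℝ) :
    (x • (1 : Matrix (Fin (2 * n)) (Fin (2 * n)) ℝ) -
        pathHam (2 * n) (fun i => Q (min (i : ℕ) (2 * n - 1 - (i : ℕ))))).det =
      pathCharFun n (fun i => Q i + if i = n - 1 then 1 else 0) x *
        pathCharFun n (fun i => Q i - if i = n - 1 then 1 else 0) x := by
  set Qs : ℕ → ℝ := fun i => Q (min i (2 * n - 1 - i)) with hQs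
  have hM : (x • (1 : Matrix (Fin (2 * n)) (Fin (2 * n)) ℝ) -
      pathHam (2 * n) (fun i => Q (min (i : ℕ) (2 * n - 1 - (i : ℕ))))) =
      charMat (2 * n) Qs x := rfl
  set D : Matrix (Fin n) (Fin n) ℝ :=
    Matrix.diagonal (fun i => if (i : ℕ) = n - 1 then 1 else 0) with hD
  set e := halfEquiv n hn with he
  have hblock : (charMat (2 * n) Qs x).submatrix e e =
      Matrix.fromBlocks (charMat n Q x) (-D) (-D) (charMat n Q x) := by
    ext a b
    cases a with
    | inl j =>
      cases b with
      | inl k =>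
        have hj := j.isLt; have hk := k.isLt
        simp only [Matrix.submatrix_apply, Matrix.fromBlocks_apply₁₁, he, halfEquiv,
          Equiv.coe_fn_mk, Sum.elim_inl]
        rw [charMat_apply, charMat_apply]
        simp only [Fin.val_mk, hQs]
        rw [show min (j : ℕ) (2 * n - 1 - (j : ℕ)) = (j : ℕ) from by omega]
      | inr k =>
        have hj := j.isLt; have hk := k.isLt
        simp only [Matrix.submatrix_apply, Matrix.fromBlocks_apply₁₂, he, halfEquiv,
          Equiv.coe_fn_mk, Sum.elim_inl, Sum.elim_inr]
        rw [charMat_apply]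
        simp only [Fin.val_mk, Matrix.neg_apply, hD, Matrix.diagonal_apply, Fin.ext_iff]
        split_ifs <;> first | (exfalso; omega) | norm_num
    | inr j =>
      cases b with
      | inl k =>
        have hj := j.isLt; have hk := k.isLt
        simp only [Matrix.submatrix_apply, Matrix.fromBlocks_apply₂₁, he, halfEquiv,
          Equiv.coe_fn_mk, Sum.elim_inl, Sum.elim_inr]
        rw [charMat_apply]
        simp only [Fin.val_mk, Matrix.neg_apply, hD, Matrix.diagonal_apply, Fin.ext_iff]
        split_ifs <;> first | (exfalso; omega) | norm_num
      | inr k =>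
        have hj := j.isLt; have hk := k.isLt
        simp only [Matrix.submatrix_apply, Matrix.fromBlocks_apply₂₂, he, halfEquiv,
          Equiv.coe_fn_mk, Sum.elim_inr]
        rw [charMat_apply, charMat_apply]
        simp only [Fin.val_mk, hQs]
        rw [show min (2 * n - 1 - (j : ℕ)) (2 * n - 1 - (2 * n - 1 - (j : ℕ))) = (j : ℕ)
          from by omega]
        split_ifs <;> first | rfl | (exfalso; omega)
  have hplus : charMat n (fun i => Q i + if i = n - 1 then 1 else 0) x =
      charMat n Q x + -D := by
    ext j k
    simp only [charMat_apply, Matrix.add_apply, Matrix.neg_apply, hD, Matrix.diagonal_apply,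
      Fin.ext_iff]
    split_ifs <;> first | (exfalso; omega) | ring
  have hminus : charMat n (fun i => Q i - if i = n - 1 then 1 else 0) x =
      charMat n Q x - -D := by
    ext j k
    simp only [charMat_apply, Matrix.sub_apply, Matrix.neg_apply, hD, Matrix.diagonal_apply,
      Fin.ext_iff]
    split_ifs <;> first | (exfalso; omega) | ring
  rw [hM, ← Matrix.det_submatrix_equiv_self e, hblock, det_fromBlocks_symm,
    pathCharFun_eq, pathCharFun_eq, hplus, hminus]

/-- factorization of the characteristic polynomial of the path `P_{2n}` with
symmetric potential `(Q₁,…,Qₙ,Qₙ,…,Q₁)`, together with the symmetry of the eigenvectors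
corresponding to the roots of each factor. -/
theorem even_path_charpoly_factorization (n : ℕ) (hn : 1 ≤ n) (Q : ℕ → ℝ) :
    (∀ x : ℝ,
      (x • (1 : Matrix (Fin (2 * n)) (Fin (2 * n)) ℝ) -
          pathHam (2 * n) (fun i => Q (min (i : ℕ) (2 * n - 1 - (i : ℕ))))).det =
        pathCharFun n (fun i => Q i + if i = n - 1 then 1 else 0) x *
          pathCharFun n (fun i => Q i - if i = n - 1 then 1 else 0) x) ∧
    (∀ x : ℝ,
      (x • (1 : Matrix (Fin (2 * n)) (Fin (2 * n)) ℝ) -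
          pathHam (2 * n) (fun i => Q (min (i : ℕ) (2 * n - 1 - (i : ℕ))))).det =
        (pathCharFun n Q x + pathCharFun (n - 1) Q x) *
          (pathCharFun n Q x - pathCharFun (n - 1) Q x)) ∧
    (∀ lam : ℝ, pathCharFun n Q lam + pathCharFun (n - 1) Q lam = 0 →
      ∃ f : Fin (2 * n) → ℝ,
        (pathHam (2 * n) (fun i => Q (min (i : ℕ) (2 * n - 1 - (i : ℕ))))).mulVec f = lam • f ∧
        f ⟨0, by omega⟩ = - f ⟨2 * n - 1, by omega⟩ ∧ f ⟨0, by omega⟩ ≠ 0) ∧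
    (∀ lam : ℝ, pathCharFun n Q lam - pathCharFun (n - 1) Q lam = 0 →
      ∃ f : Fin (2 * n) → ℝ,
        (pathHam (2 * n) (fun i => Q (min (i : ℕ) (2 * n - 1 - (i : ℕ))))).mulVec f = lam • f ∧
        f ⟨0, by omega⟩ = f ⟨2 * n - 1, by omega⟩ ∧ f ⟨0, by omega⟩ ≠ 0) := by
  
  obtain ⟨k, rfl⟩ : ∃ k, n = k + 1 := ⟨n - 1, by omega⟩
  have hk1 : k + 1 - 1 = k := by omega
  refine ⟨fun x => charpoly_factor (k + 1) hn Q x, ?_, ?_, ?_⟩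
  · intro x
    rw [charpoly_factor (k + 1) hn Q x, hk1]
    have hfun : (fun i => Q i - if i = k then 1 else 0) =
        (fun i => Q i + if i = k then (-1 : ℝ) else 0) := by
      funext i; split_ifs <;> ring
    rw [hfun, pathCharFun_shift k Q 1 x, pathCharFun_shift k Q (-1) x]
    ring
  · intro lam hlam
    rw [hk1] at hlam
    obtain ⟨f, hf1, hf2, hf3⟩ := eig_lemma k Q (-1) lam (by norm_num)
      (by linarith)
    exact ⟨f, hf1, by rw [hf2]; ring, hf3⟩
  · intro lam hlam
    rw [hk1] at hlam
    obtain ⟨f, hf1, hf2, hf3⟩ := eig_lemma k Q 1 lam (by norm_num)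
      (by linarith)
    exact ⟨f, hf1, by rw [hf2]; ring, hf3⟩
end

section
/- Let n ≥ 2, let q = (Q_1,…,Q_n,Q_n,…,Q_1) be a symmetric potential on the path P_{2n}, and let H be the corresponding Hamiltonian. If perfect state transfer occurs between the endpoints 1 and 2n at some time T ∈ ℝ, then the difference of any two eigenvalues of H is a rational number. -/
open Matrix

open scoped Nat

namespace PSTAux

open NormedSpace

variable {m : ℕ}

/-- reversal index -/
def ridx (m : ℕ) (j : Fin m) : Fin m := ⟨m - 1 - (j : ℕ), by have := j.isLt; omega⟩

lemma ridx_invol (hm : 0 < m) : Function.Involutive (ridx m) := by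
  intro j
  have := j.isLt
  simp only [ridx, Fin.ext_iff]
  omega

lemma pathHam_mulVec (q : Fin m → ℝ) (x : Fin m → ℝ) (j : Fin m) :
    (pathHam m q).mulVec x j =
      (if h : (j:ℕ)+1 < m then x ⟨(j:ℕ)+1, h⟩ else 0)
      + (if h : 0 < (j:ℕ) then x ⟨(j:ℕ)-1, by have := j.isLt; omega⟩ else 0)
      + q j * x j := by
  have hsplit : ∀ k : Fin m, pathHam m q j k * x k =
      ((if (j:ℕ)+1 = (k:ℕ) then x k else 0) + (if (k:ℕ)+1 = (j:ℕ) then x k else 0))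
      + (if j = k then q j * x k else 0) := by
    intro k
    simp only [pathHam, pathAdj, Matrix.add_apply, Matrix.of_apply, Matrix.diagonal_apply]
    by_cases h1 : (j:ℕ)+1 = (k:ℕ) <;> by_cases h2 : (k:ℕ)+1 = (j:ℕ)
    · exact absurd rfl (by omega : ¬ (0:ℕ) = 0)
    · have h3 : ¬ j = k := by simp [Fin.ext_iff]; omega
      simp [h1, h2, h3, mul_comm]
    · have h3 : ¬ j = k := by simp [Fin.ext_iff]; omega
      simp [h1, h2, h3, mul_comm]
    · by_cases h3 : j = k <;> simp [h1, h2, h3]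
  rw [Matrix.mulVec, dotProduct]
  rw [Finset.sum_congr rfl fun k _ => hsplit k]
  rw [Finset.sum_add_distrib, Finset.sum_add_distrib]
  congr 1
  · congr 1
    · by_cases h : (j:ℕ)+1 < m
      · rw [dif_pos h, Finset.sum_eq_single (⟨(j:ℕ)+1, h⟩ : Fin m)]
        · simp
        · intro b _ hb
          rw [if_neg]
          intro hc
          exact hb (by simp [Fin.ext_iff, ← hc])
        · intro habs; exact absurd (Finset.mem_univ _) habs
      · rw [dif_neg h]
        apply Finset.sum_eq_zero
        intro k _
        rw [if_neg]
        intro hc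
        have := k.isLt
        omega
    · by_cases h : 0 < (j:ℕ)
      · rw [dif_pos h, Finset.sum_eq_single (⟨(j:ℕ)-1, by have := j.isLt; omega⟩ : Fin m)]
        · rw [if_pos (by simp; omega)]
        · intro b _ hb
          rw [if_neg]
          intro hc
          exact hb (by simp [Fin.ext_iff]; omega)
        · intro habs; exact absurd (Finset.mem_univ _) habs
      · rw [dif_neg h]
        apply Finset.sum_eq_zero
        intro k _
        rw [if_neg]
        omega
  · rw [Finset.sum_eq_single j]
    · simp
    · intro b _ hb; rw [if_neg (by exact fun hc => hb hc.symm)]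
    · intro habs; exact absurd (Finset.mem_univ _) habs

lemma eig_zero (hm : 0 < m) (q : Fin m → ℝ) (lam : ℝ) (x : Fin m → ℝ)
    (heig : (pathHam m q).mulVec x = lam • x) (h0 : x ⟨0, hm⟩ = 0) : x = 0 := by
  have key : ∀ k : ℕ, ∀ hk : k < m, x ⟨k, hk⟩ = 0 := by
    intro k
    induction k using Nat.strong_induction_on with
    | _ k ih =>
      intro hk
      match k, hk with
      | 0, hk => exact h0
      | (k+1), hk =>
        have hj : k < m := by omega
        have heq := congrFun heig ⟨k, hj⟩
        rw [pathHam_mulVec] at heq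
        simp only [Pi.smul_apply, smul_eq_mul] at heq
        have hxk : x ⟨k, hj⟩ = 0 := ih k (by omega) hj
        have h1 : (if h : (k:ℕ)+1 < m then x ⟨k+1, h⟩ else 0) = x ⟨k+1, hk⟩ := by
          rw [dif_pos hk]
        have h2 : (if h : 0 < k then x ⟨k-1, by omega⟩ else 0) = 0 := by
          by_cases hk0 : 0 < k
          · rw [dif_pos hk0]; exact ih (k-1) (by omega) (by omega)
          · rw [dif_neg hk0]
        rw [hxk] at heq
        rw [h1, h2] at heq
        linarith
  funext j
  have := key j.val j.isLt
  simpa using this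

lemma pathHam_entry_symm (q : Fin m → ℝ)
    (hsym : ∀ i j : Fin m, (i:ℕ)+(j:ℕ) = m - 1 → q i = q j)
    (j k : Fin m) : pathHam m q (ridx m j) (ridx m k) = pathHam m q j k := by
  have hj := j.isLt; have hk := k.isLt
  have hq : q (ridx m j) = q j := hsym (ridx m j) j (by simp [ridx]; omega)
  simp only [pathHam, pathAdj, Matrix.add_apply, Matrix.of_apply, Matrix.diagonal_apply]
  congr 1
  · by_cases h : (j:ℕ)+1 = (k:ℕ) ∨ (k:ℕ)+1 = (j:ℕ)
    · rw [if_pos h, if_pos (by simp only [ridx]; omega)]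
    · rw [if_neg h, if_neg (by simp only [ridx]; omega)]
  · by_cases h : j = k
    · subst h
      rw [if_pos rfl, if_pos rfl, hq]
    · rw [if_neg h, if_neg (by simpa [Fin.ext_iff, ridx] using fun hc => h (Fin.ext (by omega)))]

lemma mirror (hm : 0 < m) (q : Fin m → ℝ)
    (hsym : ∀ i j : Fin m, (i:ℕ)+(j:ℕ) = m - 1 → q i = q j)
    (x : Fin m → ℝ) (j : Fin m) :
    (pathHam m q).mulVec (fun k => x (ridx m k)) j = (pathHam m q).mulVec x (ridx m j) := by
  rw [Matrix.mulVec, Matrix.mulVec, dotProduct, dotProduct]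
  rw [← Equiv.sum_comp ((ridx_invol (m := m) hm).toPerm _)
    (fun k => pathHam m q (ridx m j) k * x k)]
  apply Finset.sum_congr rfl
  intro k _
  simp only [Function.Involutive.coe_toPerm]
  rw [pathHam_entry_symm q hsym j k]

variable {ι : Type*} [Fintype ι] [DecidableEq ι]

lemma exp_skew_mul_conjTranspose (M : Matrix ι ι ℂ) (h : Mᴴ = -M) :
    exp M * (exp M)ᴴ = 1 := by
  rw [← Matrix.exp_conjTranspose, h, ← Matrix.exp_add_of_commute M (-M) (Commute.neg_right rfl),
    add_neg_cancel, exp_zero]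

lemma exp_mulVec_eigen (M : Matrix ι ι ℂ) (x : ι → ℂ) (c : ℂ) (h : M.mulVec x = c • x) :
    (exp M).mulVec x = Complex.exp c • x := by
  letI : SeminormedRing (Matrix ι ι ℂ) := Matrix.linftyOpSemiNormedRing
  letI : NormedRing (Matrix ι ι ℂ) := Matrix.linftyOpNormedRing
  letI : NormedAlgebra ℂ (Matrix ι ι ℂ) := Matrix.linftyOpNormedAlgebra
  have hpow : ∀ k : ℕ, (M ^ k).mulVec x = (c ^ k) • x := by
    intro k
    induction k with
    | zero => simp
    | succ k ih =>
      rw [pow_succ', ← Matrix.mulVec_mulVec, ih, Matrix.mulVec_smul, h, smul_smul, pow_succ]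
  have hsum : Summable (fun k : ℕ => ((k ! : ℂ))⁻¹ • M ^ k) :=
    NormedSpace.expSeries_summable' (𝕂 := ℂ) M
  let Φ : Matrix ι ι ℂ →ₗ[ℂ] (ι → ℂ) :=
    { toFun := fun A => A.mulVec x
      map_add' := fun A B => Matrix.add_mulVec A B x
      map_smul' := fun a A => Matrix.smul_mulVec a A x }
  let ΦL : Matrix ι ι ℂ →L[ℂ] (ι → ℂ) := LinearMap.toContinuousLinearMap Φ
  have hexp : exp M = ∑' k : ℕ, ((k ! : ℂ))⁻¹ • M ^ k := by
    rw [exp_eq_tsum (𝕂 := ℂ)]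
  rw [hexp]
  have := ΦL.map_tsum hsum
  have hΦ : ∀ A : Matrix ι ι ℂ, ΦL A = A.mulVec x := fun A => rfl
  calc (∑' k : ℕ, ((k ! : ℂ))⁻¹ • M ^ k).mulVec x
      = ΦL (∑' k : ℕ, ((k ! : ℂ))⁻¹ • M ^ k) := rfl
    _ = ∑' k : ℕ, ΦL (((k ! : ℂ))⁻¹ • M ^ k) := this
    _ = ∑' k : ℕ, (((k ! : ℂ))⁻¹ * c ^ k) • x := by
        congr 1
        funext k
        rw [hΦ, Matrix.smul_mulVec, hpow, smul_smul]
    _ = (∑' k : ℕ, ((k ! : ℂ))⁻¹ * c ^ k) • x := by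
        rw [Summable.tsum_smul_const]
        simpa [smul_eq_mul] using NormedSpace.expSeries_summable' (𝕂 := ℂ) c
    _ = Complex.exp c • x := by
        congr 1
        rw [Complex.exp_eq_exp_ℂ, exp_eq_tsum (𝕂 := ℂ)]
        exact tsum_congr fun k => by rw [smul_eq_mul]

lemma exp_I_pm_one {t : ℝ} (h : Complex.exp (Complex.I * t) = 1 ∨ Complex.exp (Complex.I * t) = -1) :
    ∃ c : ℤ, t = c * Real.pi := by
  have h2 : Complex.exp (Complex.I * (2*t : ℝ)) = 1 := by
    have he : (Complex.I * ((2*t : ℝ) : ℂ)) = Complex.I * t + Complex.I * t := by push_cast; ring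
    rw [he, Complex.exp_add]
    rcases h with h | h <;> rw [h] <;> ring
  rw [Complex.exp_eq_one_iff] at h2
  obtain ⟨k, hk⟩ := h2
  refine ⟨k, ?_⟩
  have h3 : ((2*t : ℝ) : ℂ) = ((k * (2 * Real.pi) : ℝ) : ℂ) := by
    apply mul_left_cancel₀ Complex.I_ne_zero
    rw [hk]
    push_cast
    ring
  have h4 : (2*t : ℝ) = k * (2 * Real.pi) := by exact_mod_cast h3
  linarith

end PSTAux

open NormedSpace PSTAux

/-- if perfect state transfer occurs between the endpoints of an even path with
symmetric potential, then the difference of any two eigenvalues of the Hamiltonian is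
rational. -/
theorem eigenvalue_differences_rational (n : ℕ) (hn : 2 ≤ n)
    (q : Fin (2 * n) → ℝ)
    (hsym : ∀ i j : Fin (2 * n), (i : ℕ) + (j : ℕ) = 2 * n - 1 → q i = q j)
    (T : ℝ)
    (hpst : pst (pathHam (2 * n) q) ⟨0, by omega⟩ ⟨2 * n - 1, by omega⟩ T)
    (lam mu : ℝ)
    (hlam : ∃ x : Fin (2 * n) → ℝ, x ≠ 0 ∧ (pathHam (2 * n) q).mulVec x = lam • x)
    (hmu : ∃ y : Fin (2 * n) → ℝ, y ≠ 0 ∧ (pathHam (2 * n) q).mulVec y = mu • y) :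
    ∃ r : ℚ, lam - mu = (r : ℝ) := by
  obtain ⟨x, hx0, hxe⟩ := hlam
  obtain ⟨y, hy0, hye⟩ := hmu
  have hm : 0 < 2*n := by omega
  set H := pathHam (2*n) q with hHdef
  set u : Fin (2*n) := ⟨0, by omega⟩ with hudef
  set v : Fin (2*n) := ⟨2*n-1, by omega⟩ with hvdef
  set M : Matrix (Fin (2*n)) (Fin (2*n)) ℂ := (Complex.I * (T:ℂ)) • H.map Complex.ofReal
    with hMdef
  set U := exp M with hUdef
  set γ := U u v with hγdef
  have hγ : ‖γ‖ = 1 := hpst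
  have hHsym : ∀ i j, H j i = H i j := by
    intro i j
    simp only [hHdef, pathHam, pathAdj, Matrix.add_apply, Matrix.of_apply, Matrix.diagonal_apply]
    congr 1
    · exact if_congr or_comm rfl rfl
    · by_cases h : i = j
      · subst h; rfl
      · rw [if_neg h, if_neg (fun hc => h hc.symm)]
  -- U is unitary
  have hMskew : Mᴴ = -M := by
    ext i j
    simp only [hMdef, Matrix.conjTranspose_apply, Matrix.smul_apply, Matrix.map_apply,
      Matrix.neg_apply, smul_eq_mul, star_mul', Complex.star_def, _root_.map_mul, Complex.conj_I,
      Complex.conj_ofReal]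
    rw [hHsym i j]
    ring
  have hUU : U * Uᴴ = 1 := exp_skew_mul_conjTranspose M hMskew
  -- row concentration
  have hrow : ∀ j, j ≠ v → U u j = 0 := by
    have trace1 : (U * Uᴴ) u u = 1 := by rw [hUU]; simp [Matrix.one_apply]
    have hexp : ∑ j, Complex.normSq (U u j) = 1 := by
      have h1 : (U * Uᴴ) u u = ∑ j, U u j * star (U u j) := by
        simp [Matrix.mul_apply, Matrix.conjTranspose_apply]
      rw [h1] at trace1
      have h2 : ∑ j, (Complex.normSq (U u j) : ℂ) = 1 := by
        rw [← trace1]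
        apply Finset.sum_congr rfl
        intro j _
        rw [Complex.star_def, Complex.mul_conj]
      exact_mod_cast h2
    have hv1 : Complex.normSq (U u v) = 1 := by
      have : Complex.normSq γ = 1 := by rw [← Complex.sq_norm, hγ]; norm_num
      exact this
    intro j hj
    have hnonneg : ∀ i ∈ Finset.univ.erase v, (0:ℝ) ≤ Complex.normSq (U u i) :=
      fun i _ => Complex.normSq_nonneg _
    have hsplit : Complex.normSq (U u v) + ∑ i ∈ Finset.univ.erase v, Complex.normSq (U u i)
        = 1 := by
      rw [← hexp]
      exact Finset.add_sum_erase Finset.univ (fun i => Complex.normSq (U u i)) (Finset.mem_univ v)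
    have hz : ∑ i ∈ Finset.univ.erase v, Complex.normSq (U u i) = 0 := by linarith
    have := (Finset.sum_eq_zero_iff_of_nonneg hnonneg).mp hz j (by simp [hj])
    exact Complex.normSq_eq_zero.mp this
  have hγne : γ ≠ 0 := by
    intro h
    rw [h] at hγ; simp at hγ
  -- per-eigenvector analysis
  have main : ∀ (lm : ℝ) (z : Fin (2*n) → ℝ), z ≠ 0 → H.mulVec z = lm • z →
      ∃ ε : ℝ, (ε = 1 ∨ ε = -1) ∧ (∀ j, z (ridx (2*n) j) = ε * z j) ∧
        Complex.exp (Complex.I * T * lm) = γ * ε := by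
    intro lm z hz hze
    have hz0 : z u ≠ 0 := fun h0 => hz (eig_zero hm q lm z hze h0)
    have hridxu : ridx (2*n) u = v := by
      simp only [ridx, hudef, hvdef, Fin.mk.injEq]
      omega
    have hmz : H.mulVec (fun k => z (ridx (2*n) k)) = lm • (fun k => z (ridx (2*n) k)) := by
      funext j
      rw [mirror hm q hsym z j, hze]
      simp
    have hw : H.mulVec (z u • (fun k => z (ridx (2*n) k)) - z v • z)
        = lm • (z u • (fun k => z (ridx (2*n) k)) - z v • z) := by
      rw [Matrix.mulVec_sub, Matrix.mulVec_smul, Matrix.mulVec_smul, hze, hmz]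
      funext j
      simp only [Pi.sub_apply, Pi.smul_apply, smul_eq_mul]
      ring
    have hw0 : (z u • (fun k => z (ridx (2*n) k)) - z v • z) u = 0 := by
      simp only [Pi.sub_apply, Pi.smul_apply, smul_eq_mul, hridxu]
      ring
    have hwzero : z u • (fun k => z (ridx (2*n) k)) - z v • z = 0 :=
      eig_zero hm q lm _ hw hw0
    have hrev : ∀ j, z (ridx (2*n) j) = (z v / z u) * z j := by
      intro j
      have hj := congrFun hwzero j
      simp only [Pi.sub_apply, Pi.smul_apply, smul_eq_mul, Pi.zero_apply, sub_eq_zero] at hj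
      field_simp
      linarith [hj]
    set ε : ℝ := z v / z u with hεdef
    obtain ⟨j0, hj0⟩ : ∃ j, z j ≠ 0 := by
      by_contra h
      push_neg at h
      exact hz (funext fun j => h j)
    have hε2 : ε * ε = 1 := by
      have e1 := hrev (ridx (2*n) j0)
      rw [ridx_invol hm j0] at e1
      rw [hrev j0] at e1
      have : z j0 * (ε * ε - 1) = 0 := by linear_combination -e1
      rcases mul_eq_zero.mp this with h | h
      · exact absurd h hj0
      · linarith
    have hεpm : ε = 1 ∨ ε = -1 := by
      have hfac : (ε - 1) * (ε + 1) = 0 := by linear_combination hε2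
      rcases mul_eq_zero.mp hfac with h | h
      · left; linarith
      · right; linarith
    have hzv : z v = ε * z u := by
      rw [← hridxu]
      exact hrev u
    -- complexified eigen-equation
    have hHz : (H.map Complex.ofReal).mulVec (fun k => (z k : ℂ)) = (lm:ℂ) • fun k => (z k : ℂ) := by
      funext j
      have hr := congrFun hze j
      simp only [Matrix.mulVec, dotProduct, Pi.smul_apply, smul_eq_mul] at hr ⊢
      simp only [Matrix.map_apply]
      have : ∑ k, ((H j k : ℂ)) * ((z k : ℂ)) = ((∑ k, H j k * z k : ℝ) : ℂ) := by
        push_cast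
        rfl
      rw [this, hr]
      push_cast
      rfl
    have hMz : M.mulVec (fun k => (z k : ℂ)) = (Complex.I * T * lm) • fun k => (z k : ℂ) := by
      rw [hMdef, Matrix.smul_mulVec, hHz, smul_smul]
    have hUz : U.mulVec (fun k => (z k : ℂ)) = Complex.exp (Complex.I * T * lm) • fun k => (z k : ℂ) :=
      exp_mulVec_eigen M _ _ hMz
    have hLHS : U.mulVec (fun k => (z k : ℂ)) u = γ * (z v : ℂ) := by
      simp only [Matrix.mulVec, dotProduct]
      rw [Finset.sum_eq_single v (fun b _ hb => by rw [hrow b hb, zero_mul])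
        (fun h => absurd (Finset.mem_univ _) h)]
    have hcomp := congrFun hUz u
    simp only [Pi.smul_apply, smul_eq_mul] at hcomp
    rw [hLHS] at hcomp
    refine ⟨ε, hεpm, hrev, ?_⟩
    have hfin : Complex.exp (Complex.I * T * lm) * (z u : ℂ) = γ * ε * (z u : ℂ) := by
      rw [← hcomp, hzv]
      push_cast
      ring
    exact mul_right_cancel₀ (by exact_mod_cast hz0) hfin
  have ratio : ∀ (a b εa εb : ℝ), (εa = 1 ∨ εa = -1) → (εb = 1 ∨ εb = -1) →
      Complex.exp (Complex.I * T * a) = γ * εa → Complex.exp (Complex.I * T * b) = γ * εb →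
      ∃ c : ℤ, T * (a - b) = c * Real.pi := by
    intro a b εa εb ha hb hea heb
    have h1 : Complex.exp (Complex.I * ((T*(a-b) : ℝ) : ℂ))
        = Complex.exp (Complex.I * T * a) / Complex.exp (Complex.I * T * b) := by
      rw [← Complex.exp_sub]
      congr 1
      push_cast
      ring
    rw [hea, heb] at h1
    have h2 : Complex.exp (Complex.I * ((T*(a-b) : ℝ) : ℂ)) = (εa:ℂ) / εb := by
      rw [h1, mul_div_mul_left _ _ hγne]
    apply exp_I_pm_one
    rcases ha with h | h <;> rcases hb with h' | h' <;> rw [h, h'] at h2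
    · left; rw [h2]; norm_num
    · right; rw [h2]; norm_num
    · right; rw [h2]; norm_num
    · left; rw [h2]; norm_num
  have hT0 : T ≠ 0 := by
    intro h
    have hM0 : M = 0 := by rw [hMdef, h]; simp
    have huv : u ≠ v := by
      simp only [hudef, hvdef, Ne, Fin.mk.injEq]
      omega
    have hγ0 : γ = 0 := by
      rw [hγdef, hUdef, hM0, exp_zero, Matrix.one_apply_ne huv]
    rw [hγ0] at hγ
    simp at hγ
  -- spectral part
  have hH : H.IsHermitian := by
    ext i j
    rw [Matrix.conjTranspose_apply, star_trivial, hHsym i j]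
  set P : Matrix (Fin (2*n)) (Fin (2*n)) ℝ := ((hH.eigenvectorUnitary : Matrix.unitaryGroup (Fin (2*n)) ℝ) : Matrix (Fin (2*n)) (Fin (2*n)) ℝ) with hPdef
  set lamf := hH.eigenvalues with hlamfdef
  have hvne : ∀ i, (⇑(hH.eigenvectorBasis i) : Fin (2*n) → ℝ) ≠ 0 := by
    intro i hzero
    have h1 : ‖hH.eigenvectorBasis i‖ = 1 := hH.eigenvectorBasis.orthonormal.1 i
    have h2 : hH.eigenvectorBasis i = 0 := by
      apply PiLp.ext
      intro j
      have := congrFun hzero j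
      simpa using this
    rw [h2, norm_zero] at h1
    norm_num at h1
  have hvec : ∀ i, H.mulVec ⇑(hH.eigenvectorBasis i) = lamf i • ⇑(hH.eigenvectorBasis i) :=
    fun i => hH.mulVec_eigenvectorBasis i
  have hchoice : ∀ i : Fin (2*n), ∃ ε : ℝ, (ε = 1 ∨ ε = -1) ∧
      (∀ j, (hH.eigenvectorBasis i) (ridx (2*n) j) = ε * (hH.eigenvectorBasis i) j) ∧
      Complex.exp (Complex.I * T * lamf i) = γ * ε :=
    fun i => main (lamf i) _ (hvne i) (hvec i)
  choose ε hε1 hεrev hεexp using hchoice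
  -- trace identities
  have hPapp : ∀ j i, P j i = hH.eigenvectorBasis i j := fun j i => rfl
  have hPP : star P * P = 1 := by
    have h := hH.eigenvectorUnitary.2
    rw [Matrix.mem_unitaryGroup_iff'] at h
    exact h
  have hPPs : P * star P = 1 := by
    have h := hH.eigenvectorUnitary.2
    rw [Matrix.mem_unitaryGroup_iff] at h
    exact h
  set Jm : Matrix (Fin (2*n)) (Fin (2*n)) ℝ :=
    Matrix.of (fun j k => if (k:ℕ) + (j:ℕ) = 2*n-1 then 1 else 0) with hJdef
  have hJP : Jm * P = P * Matrix.diagonal ε := by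
    ext j i
    rw [Matrix.mul_apply, Matrix.mul_diagonal]
    rw [Finset.sum_eq_single (ridx (2*n) j)
      (fun b _ hb => by
        rw [hJdef]
        simp only [Matrix.of_apply]
        rw [if_neg, zero_mul]
        intro hc
        apply hb
        have hbb := b.isLt
        have hjj := j.isLt
        simp only [ridx, Fin.ext_iff]
        omega)
      (fun h => absurd (Finset.mem_univ _) h)]
    rw [hJdef]
    simp only [Matrix.of_apply]
    rw [if_pos (by have := j.isLt; simp only [ridx]; omega), one_mul]
    rw [hPapp, hPapp, hεrev i j]
    ring
  have hHP : H * P = P * Matrix.diagonal lamf := by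
    ext j i
    rw [Matrix.mul_apply, Matrix.mul_diagonal]
    have hcol := congrFun (hvec i) j
    simp only [Matrix.mulVec, dotProduct, Pi.smul_apply, smul_eq_mul] at hcol
    simp only [hPapp]
    exact hcol.trans (mul_comm _ _)
  have htr0 : Matrix.trace Jm = 0 := by
    rw [Matrix.trace]
    apply Finset.sum_eq_zero
    intro j _
    rw [Matrix.diag_apply, hJdef]
    simp only [Matrix.of_apply]
    rw [if_neg]
    omega
  have htr2 : Matrix.trace (H * Jm) = 2 := by
    have hentry : ∀ j : Fin (2*n), H j (ridx (2*n) j)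
        = (if (j:ℕ) = n-1 then (1:ℝ) else 0) + (if (j:ℕ) = n then (1:ℝ) else 0) := by
      intro j
      have hj := j.isLt
      rw [hHdef]
      simp only [pathHam, pathAdj, Matrix.add_apply, Matrix.of_apply, Matrix.diagonal_apply,
        ridx, Fin.ext_iff, Fin.val_mk]
      split_ifs <;> first | rfl | (exfalso; omega) | norm_num
    have hdiag : ∀ j : Fin (2*n), (H * Jm) j j = H j (ridx (2*n) j) := by
      intro j
      rw [Matrix.mul_apply]
      rw [Finset.sum_eq_single (ridx (2*n) j)
        (fun b _ hb => by
          rw [hJdef]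
          simp only [Matrix.of_apply]
          rw [if_neg, mul_zero]
          intro hc
          apply hb
          have hbb := b.isLt
          have hjj := j.isLt
          simp only [ridx, Fin.ext_iff]
          omega)
        (fun h => absurd (Finset.mem_univ _) h)]
      rw [hJdef]
      simp only [Matrix.of_apply, ridx]
      rw [if_pos (by have := j.isLt; omega), mul_one]
    rw [Matrix.trace]
    have e0 : ∑ j, (H * Jm).diag j = ∑ j : Fin (2*n),
        ((if (j:ℕ) = n-1 then (1:ℝ) else 0) + (if (j:ℕ) = n then (1:ℝ) else 0)) := by
      apply Finset.sum_congr rfl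
      intro j _
      rw [Matrix.diag_apply, hdiag j, hentry j]
    rw [e0, Finset.sum_add_distrib]
    have e1 : ∑ j : Fin (2*n), (if (j:ℕ) = n-1 then (1:ℝ) else 0) = 1 := by
      rw [Finset.sum_eq_single (⟨n-1, by omega⟩ : Fin (2*n))
        (fun b _ hb => by
          rw [if_neg]
          intro hc
          exact hb (by simp only [Fin.ext_iff]; omega))
        (fun h => absurd (Finset.mem_univ _) h)]
      rw [if_pos rfl]
    have e2 : ∑ j : Fin (2*n), (if (j:ℕ) = n then (1:ℝ) else 0) = 1 := by
      rw [Finset.sum_eq_single (⟨n, by omega⟩ : Fin (2*n))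
        (fun b _ hb => by
          rw [if_neg]
          intro hc
          exact hb (by simp only [Fin.ext_iff]; omega))
        (fun h => absurd (Finset.mem_univ _) h)]
      rw [if_pos rfl]
    rw [e1, e2]
    norm_num
  have hsum0 : ∑ i, ε i = 0 := by
    have hdeq : Matrix.diagonal ε = star P * (Jm * P) := by
      rw [hJP, ← mul_assoc, hPP, one_mul]
    calc ∑ i, ε i = Matrix.trace (Matrix.diagonal ε) := by rw [Matrix.trace_diagonal]
      _ = Matrix.trace (star P * (Jm * P)) := by rw [hdeq]
      _ = Matrix.trace ((Jm * P) * star P) := Matrix.trace_mul_comm _ _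
      _ = Matrix.trace (Jm * (P * star P)) := by rw [mul_assoc]
      _ = Matrix.trace Jm := by rw [hPPs, mul_one]
      _ = 0 := htr0
  have hsum2 : ∑ i, ε i * lamf i = 2 := by
    have hHJmP : (H * Jm) * P = P * (Matrix.diagonal lamf * Matrix.diagonal ε) := by
      rw [mul_assoc H Jm P, hJP, ← mul_assoc H P (Matrix.diagonal ε), hHP, mul_assoc]
    have hdeq : Matrix.diagonal lamf * Matrix.diagonal ε = star P * ((H * Jm) * P) := by
      rw [hHJmP, ← mul_assoc, hPP, one_mul]
    calc ∑ i, ε i * lamf i = Matrix.trace (Matrix.diagonal lamf * Matrix.diagonal ε) := by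
          rw [Matrix.diagonal_mul_diagonal, Matrix.trace_diagonal]
          apply Finset.sum_congr rfl
          intro i _
          ring
      _ = Matrix.trace (star P * ((H * Jm) * P)) := by rw [hdeq]
      _ = Matrix.trace (((H * Jm) * P) * star P) := Matrix.trace_mul_comm _ _
      _ = Matrix.trace ((H * Jm) * (P * star P)) := by rw [mul_assoc]
      _ = Matrix.trace (H * Jm) := by rw [hPPs, mul_one]
      _ = 2 := htr2
  -- arithmetic
  obtain ⟨εx, hεx1, hεxrev, hεxexp⟩ := main lam x hx0 hxe
  obtain ⟨εy, hεy1, hεyrev, hεyexp⟩ := main mu y hy0 hye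
  have hb : ∀ i, ∃ c : ℤ, T * (lamf i - lam) = c * Real.pi :=
    fun i => ratio (lamf i) lam (ε i) εx (hε1 i) hεx1 (hεexp i) hεxexp
  choose b hbspec using hb
  obtain ⟨c, hc⟩ := ratio lam mu εx εy hεx1 hεy1 hεxexp hεyexp
  -- 2T = π N
  set N : ℤ := ∑ i, (if ε i = 1 then b i else - b i) with hNdef
  have h2T : 2 * T = Real.pi * (N : ℝ) := by
    have hTlam : ∀ i, T * lamf i = T * lam + (b i : ℝ) * Real.pi := by
      intro i
      linear_combination hbspec i
    have step1 : 2 * T = ∑ i, ε i * (T * lamf i) := by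
      have h : ∑ i, ε i * (T * lamf i) = T * ∑ i, ε i * lamf i := by
        rw [Finset.mul_sum]
        apply Finset.sum_congr rfl
        intro i _
        ring
      rw [h, hsum2]
      ring
    have step2 : ∑ i, ε i * (T * lamf i)
        = (∑ i, ε i) * (T * lam) + ∑ i, ε i * ((b i : ℝ) * Real.pi) := by
      rw [Finset.sum_mul, ← Finset.sum_add_distrib]
      apply Finset.sum_congr rfl
      intro i _
      rw [hTlam i]
      ring
    have step4 : ∑ i, ε i * ((b i : ℝ) * Real.pi) = Real.pi * (N : ℝ) := by
      have hN : ((N:ℤ):ℝ) = ∑ i, (if ε i = 1 then ((b i : ℤ):ℝ) else -((b i : ℤ):ℝ)) := by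
        rw [hNdef]
        push_cast [apply_ite (fun z : ℤ => (z : ℝ))]
        rfl
      rw [hN, Finset.mul_sum]
      apply Finset.sum_congr rfl
      intro i _
      rcases hε1 i with h | h
      · rw [h, if_pos rfl]
        ring
      · rw [h, if_neg (by norm_num)]
        ring
    rw [step1, step2, hsum0, step4]
    ring
  have hNne : (N : ℝ) ≠ 0 := by
    intro h
    apply hT0
    have h0 : 2*T = 0 := by rw [h2T, h, mul_zero]
    linarith
  have hNZ : N ≠ 0 := by
    intro h
    exact hNne (by rw [h]; simp)
  have hNne' : (N : ℚ) ≠ 0 := by exact_mod_cast hNZ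
  refine ⟨(2 * c : ℚ) / (N : ℚ), ?_⟩
  have e1 : (2*T)*(lam-mu) = 2*(c*Real.pi) := by linear_combination 2*hc
  have e2 : (Real.pi*(N:ℝ))*(lam-mu) = 2*((c:ℝ)*Real.pi) := by rw [← h2T]; exact e1
  have hkey : (N:ℝ)*(lam-mu) = 2*(c:ℝ) :=
    mul_left_cancel₀ Real.pi_ne_zero (by linear_combination e2)
  have hcast : ((2 * (c:ℚ) / (N:ℚ) : ℚ) : ℝ) = (2*(c:ℝ))/(N:ℝ) := by push_cast; ring
  rw [hcast, eq_div_iff hNne]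
  linarith [hkey]
end
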